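/- arXiv:quant-ph/9603005 — 7 statements merged into one kernel-verified Lean document; each statement's English description precedes it below -/
import Mathlib

section
/- Let P be a well-behaved transition probability space having the two-sphere property. Let Q ⊆ P be an orthoclosed subset admitting a finite basis, and let ρ ∈ P with ρ ∉ Q. Then the set ({ρ} ∪ Q)^⊥⊥ ∩ Q^⊥ is a singleton {σ} for some σ ∈ P (i.e., (ρ ∨ Q) ∧ Q^⊥ is an atom of the lattice of orthoclosed subsets of P). -/
structure TPSpace (P : Type*) where
  p : P → P → ℝ
  nonneg : ∀ ρ σ, 0 ≤ p ρ σ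
  le_one : ∀ ρ σ, p ρ σ ≤ 1
  eq_one_iff : ∀ ρ σ, p ρ σ = 1 ↔ ρ = σ
  zero_iff : ∀ ρ σ, p ρ σ = 0 ↔ p σ ρ = 0

namespace TPSpace

variable {P : Type*} (T : TPSpace P)

/-- A subset is orthogonal if `p` vanishes on all pairs of distinct points of it. -/
def IsOrthoSet (S : Set P) : Prop :=
  ∀ ρ ∈ S, ∀ σ ∈ S, ρ ≠ σ → T.p ρ σ = 0

/-- The orthoplement of a subset. -/
def orthC (Q : Set P) : Set P := {σ | ∀ ρ ∈ Q, T.p ρ σ = 0}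

/-- A subset is orthoclosed if it equals its double orthoplement. -/
def IsOrthoclosed (Q : Set P) : Prop := T.orthC (T.orthC Q) = Q

/-- `B` is a basis of `Q`: it is an orthogonal subset of `Q`, and for every `σ ∈ Q`
the supremum of the finite partial sums `∑_{ρ ∈ B} p ρ σ` equals `1`. -/
def IsBasisOf (B Q : Set P) : Prop :=
  B ⊆ Q ∧ T.IsOrthoSet B ∧
    ∀ σ ∈ Q, IsLUB {s : ℝ | ∃ F : Finset P, ↑F ⊆ B ∧ s = ∑ ρ ∈ F, T.p ρ σ} 1

/-- `S` is a maximal orthogonal subset of `Q`. -/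
def MaximalOrthoIn (Q S : Set P) : Prop :=
  S ⊆ Q ∧ T.IsOrthoSet S ∧ ∀ S', S ⊆ S' → S' ⊆ Q → T.IsOrthoSet S' → S' = S

/-- A transition probability space is well-behaved if it is symmetric and every maximal
orthogonal subset of an orthoclosed subset is a basis of it. -/
def WellBehaved : Prop :=
  (∀ ρ σ, T.p ρ σ = T.p σ ρ) ∧
    ∀ Q, T.IsOrthoclosed Q → ∀ S, T.MaximalOrthoIn Q S → T.IsBasisOf S Q

/-- The equivalence relation generated by `p ρ σ ≠ 0`. -/
def SameSector : P → P → Prop := Relation.EqvGen fun ρ σ => T.p ρ σ ≠ 0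

/-- A sector is an equivalence class of `SameSector`. -/
def IsSector (C : Set P) : Prop := ∃ ρ, C = {σ | T.SameSector ρ σ}

/-- The two-sphere property: for any two distinct equivalent points `ρ, σ`, the set
`{ρ,σ}^⊥⊥` is in bijection with the unit two-sphere in `ℝ³`, in a way turning the
transition probabilities into `p(z,w) = (1 + ⟨z,w⟩)/2`. -/
def TwoSphereProperty : Prop :=
  ∀ ρ σ : P, ρ ≠ σ → T.SameSector ρ σ →
    ∃ f : P → EuclideanSpace ℝ (Fin 3),
      Set.BijOn f (T.orthC (T.orthC {ρ, σ})) (Metric.sphere 0 1) ∧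
      ∀ ρ' ∈ T.orthC (T.orthC {ρ, σ}), ∀ σ' ∈ T.orthC (T.orthC {ρ, σ}),
        T.p ρ' σ' = (1 + (inner ℝ (f ρ') (f σ') : ℝ)) / 2

end TPSpace

namespace TPSpace

variable {P : Type*} (T : TPSpace P)

/-- Sum set used in `IsBasisOf`. -/
def sumSet (O : Set P) (z : P) : Set ℝ :=
  {s : ℝ | ∃ F : Finset P, ↑F ⊆ O ∧ s = ∑ ρ ∈ F, T.p ρ z}

lemma p_self (x : P) : T.p x x = 1 := (T.eq_one_iff x x).mpr rfl

lemma zero_swap {a b : P} (h : T.p a b = 0) : T.p b a = 0 := (T.zero_iff a b).mp h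

lemma subset_orthC2 (A : Set P) : A ⊆ T.orthC (T.orthC A) := by
  intro a ha x hx
  exact T.zero_swap (hx a ha)

lemma orthC_anti {A B : Set P} (h : A ⊆ B) : T.orthC B ⊆ T.orthC A := by
  intro x hx ρ hρ; exact hx ρ (h hρ)

lemma orthC_orthC_orthC (A : Set P) : T.orthC (T.orthC (T.orthC A)) = T.orthC A := by
  apply Set.Subset.antisymm
  · exact T.orthC_anti (T.subset_orthC2 A)
  · exact T.subset_orthC2 (T.orthC A)

lemma isOrthoclosed_orthC (A : Set P) : T.IsOrthoclosed (T.orthC A) :=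
  T.orthC_orthC_orthC A

lemma orthC2_mono {A B : Set P} (h : A ⊆ B) :
    T.orthC (T.orthC A) ⊆ T.orthC (T.orthC B) :=
  T.orthC_anti (T.orthC_anti h)

lemma orthC2_min {A W : Set P} (h : A ⊆ T.orthC (T.orthC W)) :
    T.orthC (T.orthC A) ⊆ T.orthC (T.orthC W) := by
  have h1 := T.orthC2_mono h
  rwa [T.orthC_orthC_orthC (T.orthC W)] at h1

lemma isOrthoSet_subset {A B : Set P} (h : A ⊆ B) (hB : T.IsOrthoSet B) :
    T.IsOrthoSet A := fun ρ hρ σ hσ hne => hB ρ (h hρ) σ (h hσ) hne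

/-- Zorn: extend an orthogonal subset of `Y` to a maximal one. -/
lemma exists_maximal_ortho {Y O : Set P} (hOY : O ⊆ Y) (hO : T.IsOrthoSet O) :
    ∃ S, O ⊆ S ∧ T.MaximalOrthoIn Y S := by
  obtain ⟨m, hOm, hm⟩ := zorn_subset_nonempty {S | S ⊆ Y ∧ T.IsOrthoSet S}
    (fun c hc hchain hne => by
      refine ⟨⋃₀ c, ⟨?_, ?_⟩, fun s hs => Set.subset_sUnion_of_mem hs⟩
      · intro x hx; obtain ⟨s, hs, hxs⟩ := hx; exact (hc hs).1 hxs
      · intro x hx y hy hne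
        obtain ⟨s, hs, hxs⟩ := hx; obtain ⟨t, ht, hyt⟩ := hy
        rcases hchain.total hs ht with hst | hts
        · exact (hc ht).2 x (hst hxs) y hyt hne
        · exact (hc hs).2 x hxs y (hts hyt) hne)
    O ⟨hOY, hO⟩
  exact ⟨m, hOm, hm.prop.1, hm.prop.2, fun S' hmS' hS'Y hS'o =>
    Set.Subset.antisymm (hm.le_of_ge ⟨hS'Y, hS'o⟩ hmS') hmS'⟩

end TPSpace
namespace TPSpace

variable {P : Type*} (T : TPSpace P)

lemma sumSet_nonempty (O : Set P) (z : P) : (0:ℝ) ∈ T.sumSet O z :=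
  ⟨∅, by simp, by simp⟩

/-- If all elements of `O` outside `T'` are orthogonal to `z`, the sum sets agree. -/
lemma sumSet_reduce {O T' : Set P} (z : P) (hT' : T' ⊆ O)
    (hz : ∀ s ∈ O, s ∉ T' → T.p s z = 0) :
    T.sumSet O z = T.sumSet T' z := by
  classical
  ext s; constructor
  · rintro ⟨F, hF, rfl⟩
    refine ⟨F.filter (fun x => x ∈ T'), ?_, ?_⟩
    · intro x hx
      simp only [Finset.coe_filter, Set.mem_setOf_eq] at hx
      exact hx.2
    · exact (Finset.sum_filter_of_ne (fun x hx hne => by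
        by_contra hxT'
        exact hne (hz x (hF hx) hxT'))).symm
  · rintro ⟨F, hF, rfl⟩
    exact ⟨F, hF.trans hT', rfl⟩

/-- Key lemma (hard direction): if the sums over an orthogonal set `O` have supremum 1
at `z`, then `z ∈ O^⊥⊥`. -/
lemma mem_orthC2_of_isLUB (hwb : T.WellBehaved) {O : Set P} (hO : T.IsOrthoSet O)
    {z : P} (h : IsLUB (T.sumSet O z) 1) : z ∈ T.orthC (T.orthC O) := by
  intro x hx
  -- x ⊥ O; show p x z = 0
  have hxO : ∀ o ∈ O, T.p o x = 0 := hx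
  have hxnotO : x ∉ O := fun hxm => by
    have := hxO x hxm; rw [T.p_self] at this; norm_num at this
  set W := T.orthC (T.orthC (O ∪ {x, z})) with hW
  have hsubW : O ∪ {x} ⊆ W := by
    intro y hy
    apply T.subset_orthC2 (O ∪ {x, z})
    rcases hy with hy | hy
    · exact Or.inl hy
    · exact Or.inr (Or.inl hy)
  have hOx : T.IsOrthoSet (O ∪ {x}) := by
    intro a ha b hb hne
    rcases ha with ha | ha <;> rcases hb with hb | hb
    · exact hO a ha b hb hne
    · rw [hb]; exact hxO a ha
    · rw [ha]; exact T.zero_swap (hxO b hb)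
    · rw [ha, hb] at hne; exact absurd rfl hne
  obtain ⟨S₀, hS₀sub, hS₀max⟩ := T.exists_maximal_ortho hsubW hOx
  have hbasis := hwb.2 W (T.isOrthoclosed_orthC _) S₀ hS₀max
  have hzW : z ∈ W := T.subset_orthC2 _ (Or.inr (Or.inr rfl))
  have hlub : IsLUB (T.sumSet S₀ z) 1 := hbasis.2.2 z hzW
  have hxS₀ : x ∈ S₀ := hS₀sub (Or.inr rfl)
  -- every sum over O plus p x z is ≤ 1
  have hb : ∀ s ∈ T.sumSet O z, s ≤ 1 - T.p x z := by
    rintro s ⟨F, hF, rfl⟩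
    classical
    have hxF : x ∉ F := fun hc => hxnotO (hF hc)
    have hmem : (∑ ρ ∈ insert x F, T.p ρ z) ∈ T.sumSet S₀ z := by
      refine ⟨insert x F, ?_, rfl⟩
      intro y hy
      rcases Finset.mem_insert.mp (by exact_mod_cast hy) with hy' | hy'
      · rw [hy']; exact hxS₀
      · exact hS₀sub (Or.inl (hF hy'))
    have hle : (∑ ρ ∈ insert x F, T.p ρ z) ≤ 1 := hlub.1 hmem
    rw [Finset.sum_insert hxF] at hle
    linarith
  have h1 : (1:ℝ) ≤ 1 - T.p x z := h.2 hb
  have h0 := T.nonneg x z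
  linarith

/-- Easy direction: an orthogonal set is a maximal orthogonal subset of its own
double orthoplement, hence a basis of it. -/
lemma maximalOrthoIn_orthC2 {O : Set P} (hO : T.IsOrthoSet O) :
    T.MaximalOrthoIn (T.orthC (T.orthC O)) O := by
  refine ⟨T.subset_orthC2 O, hO, fun S' hOS' hS'sub hS'o => ?_⟩
  apply Set.Subset.antisymm _ hOS'
  intro y hy
  by_contra hyO
  have hyorth : y ∈ T.orthC O := by
    intro o ho
    exact hS'o o (hOS' ho) y hy (fun h => hyO (h ▸ ho))
  have := hS'sub hy y hyorth
  rw [T.p_self] at this; norm_num at this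

lemma isLUB_of_mem_orthC2 (hwb : T.WellBehaved) {O : Set P} (hO : T.IsOrthoSet O)
    {z : P} (hz : z ∈ T.orthC (T.orthC O)) : IsLUB (T.sumSet O z) 1 := by
  have hbasis := hwb.2 (T.orthC (T.orthC O)) (T.isOrthoclosed_orthC _) O
    (T.maximalOrthoIn_orthC2 hO)
  exact hbasis.2.2 z hz

/-- Sum over a finite orthogonal set is at most 1. -/
lemma finsetSum_le_one (hwb : T.WellBehaved) {F : Finset P} (hO : T.IsOrthoSet ↑F)
    (z : P) : ∑ ρ ∈ F, T.p ρ z ≤ 1 := by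
  set W := T.orthC (T.orthC ((↑F : Set P) ∪ {z})) with hW
  have hsubW : (↑F : Set P) ⊆ W := fun y hy => T.subset_orthC2 _ (Or.inl hy)
  obtain ⟨S₀, hS₀sub, hS₀max⟩ := T.exists_maximal_ortho hsubW hO
  have hbasis := hwb.2 W (T.isOrthoclosed_orthC _) S₀ hS₀max
  have hzW : z ∈ W := T.subset_orthC2 _ (Or.inr rfl)
  have hlub := hbasis.2.2 z hzW
  exact hlub.1 ⟨F, fun y hy => hS₀sub hy, rfl⟩

lemma sum_mono_of_subset {F F' : Finset P} (h : F' ⊆ F) (z : P) :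
    ∑ ρ ∈ F', T.p ρ z ≤ ∑ ρ ∈ F, T.p ρ z :=
  Finset.sum_le_sum_of_subset_of_nonneg h (fun i _ _ => T.nonneg i z)

lemma mem_orthC2_of_finsetSum (hwb : T.WellBehaved) {F : Finset P}
    (hO : T.IsOrthoSet ↑F) {z : P} (h : ∑ ρ ∈ F, T.p ρ z = 1) :
    z ∈ T.orthC (T.orthC ↑F) := by
  apply T.mem_orthC2_of_isLUB hwb hO
  constructor
  · rintro s ⟨F', hF', rfl⟩
    have : F' ⊆ F := fun y hy => by exact_mod_cast hF' (by exact_mod_cast hy)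
    calc ∑ ρ ∈ F', T.p ρ z ≤ ∑ ρ ∈ F, T.p ρ z := T.sum_mono_of_subset this z
    _ = 1 := h
  · intro b hb
    exact hb ⟨F, subset_rfl, h.symm⟩

lemma finsetSum_of_mem_orthC2 (hwb : T.WellBehaved) {F : Finset P}
    (hO : T.IsOrthoSet ↑F) {z : P} (hz : z ∈ T.orthC (T.orthC ↑F)) :
    ∑ ρ ∈ F, T.p ρ z = 1 := by
  have hlub := T.isLUB_of_mem_orthC2 hwb hO hz
  have h1 : ∑ ρ ∈ F, T.p ρ z ≤ 1 := hlub.1 ⟨F, subset_rfl, rfl⟩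
  have h2 : (1:ℝ) ≤ ∑ ρ ∈ F, T.p ρ z := by
    apply hlub.2
    rintro s ⟨F', hF', rfl⟩
    exact T.sum_mono_of_subset (fun y hy => by exact_mod_cast hF' (by exact_mod_cast hy)) z
  linarith

lemma p_eq_one_of_isLUB_singleton {z y : P} (h : IsLUB (T.sumSet {z} y) 1) :
    T.p z y = 1 := by
  have h1 : T.p z y ≤ 1 := T.le_one z y
  have h2 : (1:ℝ) ≤ T.p z y := by
    apply h.2
    rintro s ⟨F, hF, rfl⟩
    have : F ⊆ {z} := fun a ha => by
      have := hF (by exact_mod_cast ha); simpa using this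
    rcases Finset.subset_singleton_iff.mp this with rfl | rfl
    · simpa using T.nonneg z y
    · simp
  linarith

end TPSpace
namespace TPSpace

variable {P : Type*} (T : TPSpace P)

lemma antipode_exists {α β : P} {f : P → EuclideanSpace ℝ (Fin 3)}
    (hbij : Set.BijOn f (T.orthC (T.orthC {α, β})) (Metric.sphere 0 1))
    (hform : ∀ ρ' ∈ T.orthC (T.orthC {α, β}), ∀ σ' ∈ T.orthC (T.orthC {α, β}),
      T.p ρ' σ' = (1 + (inner ℝ (f ρ') (f σ') : ℝ)) / 2)
    {z : P} (hz : z ∈ T.orthC (T.orthC {α, β})) :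
    ∃ w ∈ T.orthC (T.orthC {α, β}), T.p z w = 0 ∧
      ∀ y ∈ T.orthC (T.orthC {α, β}), T.p z y + T.p w y = 1 := by
  have hfz : f z ∈ Metric.sphere (0 : EuclideanSpace ℝ (Fin 3)) 1 := hbij.mapsTo hz
  have hnegmem : -f z ∈ Metric.sphere (0 : EuclideanSpace ℝ (Fin 3)) 1 := by
    rw [mem_sphere_zero_iff_norm] at hfz ⊢; simpa using hfz
  obtain ⟨w, hwD, hfw⟩ := hbij.surjOn hnegmem
  have hnorm : ‖f z‖ = 1 := mem_sphere_zero_iff_norm.mp hfz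
  have hinner : (inner ℝ (f z) (f w) : ℝ) = -1 := by
    rw [hfw, inner_neg_right, real_inner_self_eq_norm_sq, hnorm]; norm_num
  refine ⟨w, hwD, ?_, ?_⟩
  · rw [hform z hz w hwD, hinner]; norm_num
  · intro y hy
    rw [hform z hz y hy, hform w hwD y hy, hfw, inner_neg_left]
    ring

/-- Rigidity: a point orthogonal to two distinct points of a two-sphere is orthogonal
to the whole two-sphere. -/
lemma sphere_rigid (hwb : T.WellBehaved) {α β : P} {f : P → EuclideanSpace ℝ (Fin 3)}
    (hbij : Set.BijOn f (T.orthC (T.orthC {α, β})) (Metric.sphere 0 1))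
    (hform : ∀ ρ' ∈ T.orthC (T.orthC {α, β}), ∀ σ' ∈ T.orthC (T.orthC {α, β}),
      T.p ρ' σ' = (1 + (inner ℝ (f ρ') (f σ') : ℝ)) / 2)
    {z y : P} (hz : z ∈ T.orthC (T.orthC {α, β})) (hy : y ∈ T.orthC (T.orthC {α, β}))
    (hzy : z ≠ y) {x : P} (hxz : T.p x z = 0) (hxy : T.p x y = 0) :
    ∀ d ∈ T.orthC (T.orthC {α, β}), T.p x d = 0 := by
  classical
  set D := T.orthC (T.orthC {α, β}) with hD
  set Y := T.orthC (T.orthC {α, β} ∪ {x}) with hY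
  have hYD : Y ⊆ D := T.orthC_anti Set.subset_union_left
  have hmemY : ∀ u, u ∈ D → T.p x u = 0 → u ∈ Y := by
    intro u hu hxu ρ hρ
    rcases hρ with hρ | hρ
    · exact hu ρ hρ
    · rw [hρ]; exact hxu
  have hzY : z ∈ Y := hmemY z hz hxz
  have hyY : y ∈ Y := hmemY y hy hxy
  have hzs : ({z} : Set P) ⊆ Y := by intro u hu; rw [hu]; exact hzY
  have hzo : T.IsOrthoSet ({z} : Set P) := by
    intro a ha b hb hne; rw [ha, hb] at hne; exact absurd rfl hne
  obtain ⟨S₀, hsub, hmax⟩ := T.exists_maximal_ortho hzs hzo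
  have hbasis := hwb.2 Y (T.isOrthoclosed_orthC _) S₀ hmax
  have hzS₀ : z ∈ S₀ := hsub rfl
  by_cases ho : ∃ o ∈ S₀, o ≠ z
  · obtain ⟨o, hoS, hone⟩ := ho
    have hoY : o ∈ Y := hmax.1 hoS
    have hoD : o ∈ D := hYD hoY
    have hxo : T.p x o = 0 := hoY x (Or.inr rfl)
    have hpzo : T.p z o = 0 := hmax.2.1 z hzS₀ o hoS (fun h => hone h.symm)
    have hz1 : ‖f z‖ = 1 := mem_sphere_zero_iff_norm.mp (hbij.mapsTo hz)
    have ho1 : ‖f o‖ = 1 := mem_sphere_zero_iff_norm.mp (hbij.mapsTo hoD)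
    have hinner : (inner ℝ (f z) (f o) : ℝ) = -1 := by
      have := hform z hz o hoD
      rw [hpzo] at this
      linarith
    have hsumzero : ‖f z + f o‖ ^ 2 = 0 := by
      rw [norm_add_sq_real, hz1, ho1, hinner]; ring
    have hfo : f o = -f z := by
      have h0 : f z + f o = 0 := by
        have := sq_eq_zero_iff.mp hsumzero
        exact norm_eq_zero.mp this
      exact eq_neg_of_add_eq_zero_right h0
    intro d hd
    have hsum : T.p z d + T.p o d = 1 := by
      rw [hform z hz d hd, hform o hoD d hd, hfo, inner_neg_left]
      ring
    have hzo' : z ≠ o := fun h => hone h.symm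
    have hset : T.IsOrthoSet ↑({z, o} : Finset P) := by
      intro a ha b hb hne
      simp only [Finset.coe_insert, Finset.coe_singleton, Set.mem_insert_iff,
        Set.mem_singleton_iff] at ha hb
      rcases ha with rfl | rfl <;> rcases hb with rfl | rfl
      · exact absurd rfl hne
      · exact hpzo
      · exact T.zero_swap hpzo
      · exact absurd rfl hne
    have hsum2 : ∑ ρ ∈ ({z, o} : Finset P), T.p ρ d = 1 := by
      rw [Finset.sum_pair hzo']; exact hsum
    have hd2 := T.mem_orthC2_of_finsetSum hwb hset hsum2
    apply hd2 x
    intro ρ hρ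
    simp only [Finset.coe_insert, Finset.coe_singleton, Set.mem_insert_iff,
      Set.mem_singleton_iff] at hρ
    rcases hρ with rfl | rfl
    · exact T.zero_swap hxz
    · exact T.zero_swap hxo
  · push_neg at ho
    have hS₀eq : S₀ = ({z} : Set P) := by
      apply Set.Subset.antisymm
      · intro o hoS; exact ho o hoS
      · intro u hu; rw [hu]; exact hzS₀
    have hlub := hbasis.2.2 y hyY
    rw [hS₀eq] at hlub
    have h1 := T.p_eq_one_of_isLUB_singleton hlub
    exact absurd ((T.eq_one_iff z y).mp h1) hzy

end TPSpace


/-- In a well-behaved transition probability space with the two-sphere property, if `Q`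
is orthoclosed with a finite basis and `ρ ∉ Q`, then `(ρ ∨ Q) ∧ Q^⊥`, i.e.
`({ρ} ∪ Q)^⊥⊥ ∩ Q^⊥`, is an atom (a singleton). -/
theorem join_atom_meet_orthC_is_atom {P : Type*} (T : TPSpace P)
    (hwb : T.WellBehaved) (h2s : T.TwoSphereProperty)
    (Q : Set P) (hQ : T.IsOrthoclosed Q)
    (B : Finset P) (hB : T.IsBasisOf ↑B Q)
    (ρ : P) (hρ : ρ ∉ Q) :
    ∃ σ : P, T.orthC (T.orthC ({ρ} ∪ Q)) ∩ T.orthC Q = {σ} := by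
  classical
  set R := T.orthC (T.orthC ({ρ} ∪ Q)) with hR
  have hRoc : T.IsOrthoclosed R := T.isOrthoclosed_orthC _
  have hQR : Q ⊆ R := fun q hq => T.subset_orthC2 _ (Or.inr hq)
  have hρR : ρ ∈ R := T.subset_orthC2 _ (Or.inl rfl)
  have hQeq : Q = T.orthC (T.orthC ↑B) := by
    apply Set.Subset.antisymm
    · intro z hz
      exact T.mem_orthC2_of_isLUB hwb hB.2.1 (hB.2.2 z hz)
    · intro x hx; rw [← hQ]; exact T.orthC2_mono hB.1 hx
  have hQperp : T.orthC Q = T.orthC ↑B := by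
    rw [hQeq, T.orthC_orthC_orthC]
  have hBo : T.IsOrthoSet (↑B : Set P) := hB.2.1
  have hBR : (↑B : Set P) ⊆ R := hB.1.trans hQR
  obtain ⟨S, hBS, hSmax⟩ := T.exists_maximal_ortho hBR hBo
  have hSb := hwb.2 R hRoc S hSmax
  have hSR : S ⊆ R := hSmax.1
  have hSo : T.IsOrthoSet S := hSmax.2.1
  -- Key fact: every element of R ∩ Q^⊥ has nonzero transition probability with ρ.
  have key : ∀ σ, σ ∈ R → σ ∈ T.orthC Q → T.p σ ρ = 0 → False := by
    intro σ hσR hσQ hσρ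
    have hσB : σ ∈ T.orthC ↑B := hQperp ▸ hσQ
    have hσnB : σ ∉ (↑B : Set P) := fun hmem => by
      have := hσB σ hmem; rw [T.p_self] at this; norm_num at this
    have hOsub : (↑B : Set P) ∪ {σ} ⊆ R := by
      intro u hu
      rcases hu with hu | hu
      · exact hBR hu
      · rw [hu]; exact hσR
    have hOo : T.IsOrthoSet ((↑B : Set P) ∪ {σ}) := by
      intro a ha b hb hne
      rcases ha with ha | ha <;> rcases hb with hb | hb
      · exact hBo a ha b hb hne
      · rw [hb]; exact hσB a ha
      · rw [ha]; exact T.zero_swap (hσB b hb)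
      · rw [ha, hb] at hne; exact absurd rfl hne
    obtain ⟨S₁, hS₁sub, hS₁max⟩ := T.exists_maximal_ortho hOsub hOo
    have hS₁b := hwb.2 R hRoc S₁ hS₁max
    have hσS₁ : σ ∈ S₁ := hS₁sub (Or.inr rfl)
    have hlub : IsLUB (T.sumSet S₁ ρ) 1 := hS₁b.2.2 ρ hρR
    have hred : T.sumSet S₁ ρ = T.sumSet (S₁ \ {σ}) ρ :=
      T.sumSet_reduce ρ Set.diff_subset (fun s hs hsn => by
        have hsσ : s = σ := by
          by_contra hne
          exact hsn ⟨hs, hne⟩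
        rw [hsσ]; exact hσρ)
    rw [hred] at hlub
    have hρZ := T.mem_orthC2_of_isLUB hwb
      (T.isOrthoSet_subset Set.diff_subset hS₁max.2.1) hlub
    have hQZ : Q ⊆ T.orthC (T.orthC (S₁ \ {σ})) := by
      rw [hQeq]
      apply T.orthC2_mono
      intro b hb
      exact ⟨hS₁sub (Or.inl hb), fun hbσ => hσnB (hbσ ▸ hb)⟩
    have hRZ : R ⊆ T.orthC (T.orthC (S₁ \ {σ})) := by
      apply T.orthC2_min
      intro u hu
      rcases hu with hu | hu
      · rw [hu]; exact hρZ
      · exact hQZ hu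
    have hσperp : σ ∈ T.orthC (S₁ \ {σ}) := by
      intro s hs
      exact hS₁max.2.1 s hs.1 σ hσS₁ (fun h => hs.2 h)
    have := hRZ hσR σ hσperp
    rw [T.p_self] at this; norm_num at this
  -- The extension of B to S is nonempty.
  have hEne : ∃ σ0, σ0 ∈ S ∧ σ0 ∉ (↑B : Set P) := by
    by_contra h
    push_neg at h
    have hSeq : S = (↑B : Set P) := Set.Subset.antisymm h hBS
    have hlub : IsLUB (T.sumSet S ρ) 1 := hSb.2.2 ρ hρR
    rw [show T.sumSet S ρ = T.sumSet (↑B : Set P) ρ from by rw [hSeq]] at hlub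
    have := T.mem_orthC2_of_isLUB hwb hBo hlub
    rw [← hQeq] at this
    exact hρ this
  obtain ⟨σ0, hσ0S, hσ0B⟩ := hEne
  have hmemE : ∀ s, s ∈ S → s ∉ (↑B : Set P) → s ∈ T.orthC Q := by
    intro s hsS hsB
    rw [hQperp]
    intro b hb
    exact T.zero_swap (hSo s hsS b (hBS hb) (fun h => hsB (h ▸ hb)))
  by_cases huniq : ∀ s, s ∈ S → s ∉ (↑B : Set P) → s = σ0
  · -- the extension is a singleton {σ0}; then R ∩ Q^⊥ = {σ0}
    refine ⟨σ0, ?_⟩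
    apply Set.eq_singleton_iff_unique_mem.mpr
    refine ⟨⟨hSR hσ0S, hmemE σ0 hσ0S hσ0B⟩, ?_⟩
    rintro τ ⟨hτR, hτQ⟩
    have hτB : τ ∈ T.orthC ↑B := hQperp ▸ hτQ
    have hlub : IsLUB (T.sumSet S τ) 1 := hSb.2.2 τ hτR
    have hred : T.sumSet S τ = T.sumSet {σ0} τ :=
      T.sumSet_reduce τ (by intro u hu; rw [hu]; exact hσ0S)
        (fun s hs hsn => by
          by_cases hsB : s ∈ (↑B : Set P)
          · exact hτB s hsB
          · exact absurd (huniq s hs hsB) hsn)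
    rw [hred] at hlub
    have := T.p_eq_one_of_isLUB_singleton hlub
    exact ((T.eq_one_iff σ0 τ).mp this).symm
  · -- two distinct extension points σ1 and σ0: contradiction
    exfalso
    push_neg at huniq
    obtain ⟨σ1, hσ1S, hσ1B, hσ1ne⟩ := huniq
    have hσ1Q : σ1 ∈ T.orthC Q := hmemE σ1 hσ1S hσ1B
    have hσ0Q : σ0 ∈ T.orthC Q := hmemE σ0 hσ0S hσ0B
    have p1ne : T.p σ1 ρ ≠ 0 := fun h => key σ1 (hSR hσ1S) hσ1Q h
    have p2ne : T.p σ0 ρ ≠ 0 := fun h => key σ0 (hSR hσ0S) hσ0Q h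
    have h12 : T.p σ1 σ0 = 0 := hSo σ1 hσ1S σ0 hσ0S hσ1ne
    have h21 : T.p σ0 σ1 = 0 := T.zero_swap h12
    -- the two-sphere N through σ1 and σ0
    have hsec12 : T.SameSector σ1 σ0 :=
      Relation.EqvGen.trans _ _ _ (Relation.EqvGen.rel _ _ p1ne)
        (Relation.EqvGen.symm _ _ (Relation.EqvGen.rel _ _ p2ne))
    obtain ⟨fN, hbijN, hformN⟩ := h2s σ1 σ0 hσ1ne hsec12
    have hσ1DN : σ1 ∈ T.orthC (T.orthC {σ1, σ0}) := T.subset_orthC2 _ (Or.inl rfl)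
    have hσ0DN : σ0 ∈ T.orthC (T.orthC {σ1, σ0}) := T.subset_orthC2 _ (Or.inr rfl)
    have hDNR : T.orthC (T.orthC {σ1, σ0}) ⊆ R := T.orthC2_min (by
      intro v hv
      simp only [Set.mem_insert_iff, Set.mem_singleton_iff] at hv
      rcases hv with rfl | rfl
      · exact hSR hσ1S
      · exact hSR hσ0S)
    have hQperpDN : ∀ d ∈ T.orthC (T.orthC {σ1, σ0}), d ∈ T.orthC Q := by
      intro d hd
      rw [hQperp]
      intro b hb
      have hbmem : b ∈ T.orthC {σ1, σ0} := by
        intro v hv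
        simp only [Set.mem_insert_iff, Set.mem_singleton_iff] at hv
        rcases hv with rfl | rfl
        · exact T.zero_swap (hσ1Q b (hB.1 hb))
        · exact T.zero_swap (hσ0Q b (hB.1 hb))
      exact hd b hbmem
    -- ρ is not in N
    have hρDN : ρ ∉ T.orthC (T.orthC {σ1, σ0}) := by
      intro hρN
      obtain ⟨w, hwDN, hw0, hwsum⟩ := T.antipode_exists hbijN hformN hρN
      have hwperp : w ∈ T.orthC ({ρ} ∪ Q) := by
        intro v hv
        rcases hv with hv | hv
        · rw [hv]; exact hw0
        · have hvmem : v ∈ T.orthC {σ1, σ0} := by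
            intro v' hv'
            simp only [Set.mem_insert_iff, Set.mem_singleton_iff] at hv'
            rcases hv' with rfl | rfl
            · exact T.zero_swap (hσ1Q v hv)
            · exact T.zero_swap (hσ0Q v hv)
          exact hwDN v hvmem
      have := hDNR hwDN w hwperp
      rw [T.p_self] at this; norm_num at this
    have hρσ1 : ρ ≠ σ1 := fun h => p2ne (by rw [h]; exact h21)
    have hρσ0 : ρ ≠ σ0 := fun h => p1ne (by rw [h]; exact h12)
    -- the two-sphere N1 through ρ and σ1, with a := antipode of σ1 in N1
    have hsecρ1 : T.SameSector ρ σ1 :=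
      Relation.EqvGen.symm _ _ (Relation.EqvGen.rel _ _ p1ne)
    obtain ⟨f1, hbij1, hform1⟩ := h2s ρ σ1 hρσ1 hsecρ1
    have hρD1 : ρ ∈ T.orthC (T.orthC {ρ, σ1}) := T.subset_orthC2 _ (Or.inl rfl)
    have hσ1D1 : σ1 ∈ T.orthC (T.orthC {ρ, σ1}) := T.subset_orthC2 _ (Or.inr rfl)
    obtain ⟨a, haD1, ha0, hasum⟩ := T.antipode_exists hbij1 hform1 hσ1D1
    have hD1R : T.orthC (T.orthC {ρ, σ1}) ⊆ R := T.orthC2_min (by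
      intro v hv
      simp only [Set.mem_insert_iff, Set.mem_singleton_iff] at hv
      rcases hv with rfl | rfl
      · exact hρR
      · exact hSR hσ1S)
    have haR : a ∈ R := hD1R haD1
    have hσ1a : σ1 ≠ a := fun h => by
      rw [← h, T.p_self] at ha0; norm_num at ha0
    -- k := p a σ0 is nonzero
    have hk : T.p a σ0 ≠ 0 := by
      intro hk0
      exact p2ne (T.sphere_rigid hwb hbij1 hform1 hσ1D1 haD1 hσ1a
        (x := σ0) h21 (T.zero_swap hk0) ρ hρD1)
    have haσ0 : a ≠ σ0 := by
      intro h
      apply hρDN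
      intro x hx
      have hx1 : T.p x σ1 = 0 := T.zero_swap (hx σ1 (Or.inl rfl))
      have hx2 : T.p x σ0 = 0 := T.zero_swap (hx σ0 (Or.inr rfl))
      exact T.sphere_rigid hwb hbij1 hform1 hσ1D1 (h ▸ haD1) hσ1ne hx1 hx2 ρ hρD1
    -- the two-sphere N2 through σ0 and a, with w := antipode of σ0 in N2
    have hsec0a : T.SameSector σ0 a :=
      Relation.EqvGen.symm _ _ (Relation.EqvGen.rel _ _ hk)
    obtain ⟨f2, hbij2, hform2⟩ := h2s σ0 a (Ne.symm haσ0) hsec0a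
    have hσ0D2 : σ0 ∈ T.orthC (T.orthC {σ0, a}) := T.subset_orthC2 _ (Or.inl rfl)
    have haD2 : a ∈ T.orthC (T.orthC {σ0, a}) := T.subset_orthC2 _ (Or.inr rfl)
    obtain ⟨w, hwD2, hw0, hwsum⟩ := T.antipode_exists hbij2 hform2 hσ0D2
    have hσ0w : σ0 ≠ w := fun h => by
      rw [← h, T.p_self] at hw0; norm_num at hw0
    have hwσ1 : T.p σ1 w = 0 :=
      T.sphere_rigid hwb hbij2 hform2 hσ0D2 haD2 (Ne.symm haσ0)
        (x := σ1) h12 ha0 w hwD2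
    have hD2R : T.orthC (T.orthC {σ0, a}) ⊆ R := T.orthC2_min (by
      intro v hv
      simp only [Set.mem_insert_iff, Set.mem_singleton_iff] at hv
      rcases hv with rfl | rfl
      · exact hSR hσ0S
      · exact haR)
    have hwR : w ∈ R := hD2R hwD2
    -- w lies in Q' := (S \ {σ1, σ0})^⊥⊥
    have hB'o : T.IsOrthoSet (S \ {σ1, σ0}) := T.isOrthoSet_subset Set.diff_subset hSo
    have hlubw : IsLUB (T.sumSet S w) 1 := hSb.2.2 w hwR
    have hredw : T.sumSet S w = T.sumSet (S \ {σ1, σ0}) w :=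
      T.sumSet_reduce w Set.diff_subset (fun s hs hsn => by
        have hsmem : s ∈ ({σ1, σ0} : Set P) := by
          by_contra hc; exact hsn ⟨hs, hc⟩
        simp only [Set.mem_insert_iff, Set.mem_singleton_iff] at hsmem
        rcases hsmem with rfl | rfl
        · exact hwσ1
        · exact hw0)
    rw [hredw] at hlubw
    have hwQ' : w ∈ T.orthC (T.orthC (S \ {σ1, σ0})) :=
      T.mem_orthC2_of_isLUB hwb hB'o hlubw
    -- ρ ∈ {σ1, a}^⊥⊥ and a ∈ {σ0, w}^⊥⊥, so ρ ∈ V := {w, σ1, σ0}^⊥⊥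
    have hρ1a : ρ ∈ T.orthC (T.orthC {σ1, a}) := by
      intro x hx
      exact T.sphere_rigid hwb hbij1 hform1 hσ1D1 haD1 hσ1a
        (T.zero_swap (hx σ1 (Or.inl rfl))) (T.zero_swap (hx a (Or.inr rfl))) ρ hρD1
    have ha0w : a ∈ T.orthC (T.orthC {σ0, w}) := by
      intro x hx
      exact T.sphere_rigid hwb hbij2 hform2 hσ0D2 hwD2 hσ0w
        (T.zero_swap (hx σ0 (Or.inl rfl))) (T.zero_swap (hx w (Or.inr rfl))) a haD2
    have hwV : w ∈ T.orthC (T.orthC {w, σ1, σ0}) := T.subset_orthC2 _ (Or.inl rfl)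
    have hσ1V : σ1 ∈ T.orthC (T.orthC {w, σ1, σ0}) :=
      T.subset_orthC2 _ (Or.inr (Or.inl rfl))
    have hσ0V : σ0 ∈ T.orthC (T.orthC {w, σ1, σ0}) :=
      T.subset_orthC2 _ (Or.inr (Or.inr rfl))
    have haV : a ∈ T.orthC (T.orthC {w, σ1, σ0}) := by
      refine T.orthC2_min ?_ ha0w
      intro v hv
      simp only [Set.mem_insert_iff, Set.mem_singleton_iff] at hv
      rcases hv with rfl | rfl
      · exact hσ0V
      · exact hwV
    have hρV : ρ ∈ T.orthC (T.orthC {w, σ1, σ0}) := by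
      refine T.orthC2_min ?_ hρ1a
      intro v hv
      simp only [Set.mem_insert_iff, Set.mem_singleton_iff] at hv
      rcases hv with rfl | rfl
      · exact hσ1V
      · exact haV
    -- transition probabilities with the orthogonal triple w, σ1, σ0
    have hwσ1' : T.p w σ1 = 0 := T.zero_swap hwσ1
    have hwσ0' : T.p w σ0 = 0 := T.zero_swap hw0
    have hwne1 : w ≠ σ1 := fun h => by
      rw [h, T.p_self] at hwσ1'; norm_num at hwσ1'
    have hwne0 : w ≠ σ0 := fun h => hσ0w h.symm
    have hσ1w' : T.p σ1 w = 0 := hwσ1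
    have hσ0w' : T.p σ0 w = 0 := hw0
    have hcoe3 : (↑({w, σ1, σ0} : Finset P) : Set P) = ({w, σ1, σ0} : Set P) := by simp
    have hFo : T.IsOrthoSet (↑({w, σ1, σ0} : Finset P) : Set P) := by
      rw [hcoe3]
      intro x hx y hy hne
      simp only [Set.mem_insert_iff, Set.mem_singleton_iff] at hx hy
      rcases hx with rfl | rfl | rfl <;> rcases hy with rfl | rfl | rfl <;>
        first
          | exact absurd rfl hne
          | assumption
    have hρF : ρ ∈ T.orthC (T.orthC (↑({w, σ1, σ0} : Finset P) : Set P)) := by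
      rw [hcoe3]; exact hρV
    have hsum3 : T.p w ρ + T.p σ1 ρ + T.p σ0 ρ = 1 := by
      have h := T.finsetSum_of_mem_orthC2 hwb hFo hρF
      rw [Finset.sum_insert (by simp [hwne1, hwne0]),
        Finset.sum_insert (by simp [hσ1ne]), Finset.sum_singleton] at h
      linarith
    have hs'ne : T.p w ρ ≠ 0 := by
      intro h0
      apply hρDN
      have hcoe2 : (↑({σ1, σ0} : Finset P) : Set P) = ({σ1, σ0} : Set P) := by simp
      have hpair : T.IsOrthoSet (↑({σ1, σ0} : Finset P) : Set P) := by
        rw [hcoe2]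
        intro x hx y hy hne
        simp only [Set.mem_insert_iff, Set.mem_singleton_iff] at hx hy
        rcases hx with rfl | rfl <;> rcases hy with rfl | rfl <;>
          first
            | exact absurd rfl hne
            | assumption
      have hsum2 : ∑ ρ' ∈ ({σ1, σ0} : Finset P), T.p ρ' ρ = 1 := by
        rw [Finset.sum_pair hσ1ne]; linarith
      have := T.mem_orthC2_of_finsetSum hwb hpair hsum2
      rwa [hcoe2] at this
    have hs'ne1 : T.p w ρ ≠ 1 := fun h => by
      have hwρeq : w = ρ := (T.eq_one_iff w ρ).mp h
      exact p1ne (hwρeq ▸ hσ1w')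
    have hwρ : w ≠ ρ := fun h => hs'ne1 ((T.eq_one_iff w ρ).mpr h)
    -- refine the basis of Q' to contain w
    have hwsing : ({w} : Set P) ⊆ T.orthC (T.orthC (S \ {σ1, σ0})) := by
      intro v hv; rw [hv]; exact hwQ'
    have hsingo : T.IsOrthoSet ({w} : Set P) := by
      intro x hx y hy hne; rw [hx, hy] at hne; exact absurd rfl hne
    obtain ⟨B'', hwB'', hB''max⟩ := T.exists_maximal_ortho hwsing hsingo
    have hB''b := hwb.2 _ (T.isOrthoclosed_orthC _) B'' hB''max
    have hB''Q' : B'' ⊆ T.orthC (T.orthC (S \ {σ1, σ0})) := hB''max.1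
    have hB''o : T.IsOrthoSet B'' := hB''max.2.1
    have hwB''mem : w ∈ B'' := hwB'' rfl
    have hQ'B'' : T.orthC (T.orthC (S \ {σ1, σ0})) = T.orthC (T.orthC B'') := by
      apply Set.Subset.antisymm
      · intro zq hzq
        exact T.mem_orthC2_of_isLUB hwb hB''o (hB''b.2.2 zq hzq)
      · exact T.orthC2_min hB''Q'
    have horthCeq : T.orthC (S \ {σ1, σ0}) = T.orthC B'' := by
      have := congrArg T.orthC hQ'B''
      rwa [T.orthC_orthC_orthC, T.orthC_orthC_orthC] at this
    have hσ1perpB' : σ1 ∈ T.orthC (S \ {σ1, σ0}) := by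
      intro s hs
      exact hSo s hs.1 σ1 hσ1S (fun h => hs.2 (by rw [h]; exact Or.inl rfl))
    have hσ0perpB' : σ0 ∈ T.orthC (S \ {σ1, σ0}) := by
      intro s hs
      exact hSo s hs.1 σ0 hσ0S (fun h => hs.2 (by rw [h]; exact Or.inr rfl))
    have hB''σ1 : ∀ b ∈ B'', T.p b σ1 = 0 := fun b hb =>
      T.zero_swap (hB''Q' hb σ1 hσ1perpB')
    have hB''σ0 : ∀ b ∈ B'', T.p b σ0 = 0 := fun b hb =>
      T.zero_swap (hB''Q' hb σ0 hσ0perpB')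
    have hQ'R : T.orthC (T.orthC (S \ {σ1, σ0})) ⊆ R :=
      T.orthC2_min (Set.diff_subset.trans hSR)
    -- S'' := B'' ∪ {σ1, σ0} is a maximal orthogonal subset of R
    have hS''R : B'' ∪ ({σ1, σ0} : Set P) ⊆ R := by
      intro v hv
      rcases hv with hv | hv
      · exact hQ'R (hB''Q' hv)
      · simp only [Set.mem_insert_iff, Set.mem_singleton_iff] at hv
        rcases hv with rfl | rfl
        · exact hSR hσ1S
        · exact hSR hσ0S
    have hS''o : T.IsOrthoSet (B'' ∪ ({σ1, σ0} : Set P)) := by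
      intro x hx y hy hne
      rcases hx with hx | hx <;> rcases hy with hy | hy
      · exact hB''o x hx y hy hne
      · simp only [Set.mem_insert_iff, Set.mem_singleton_iff] at hy
        rcases hy with rfl | rfl
        · exact hB''σ1 x hx
        · exact hB''σ0 x hx
      · simp only [Set.mem_insert_iff, Set.mem_singleton_iff] at hx
        rcases hx with rfl | rfl
        · exact T.zero_swap (hB''σ1 y hy)
        · exact T.zero_swap (hB''σ0 y hy)
      · simp only [Set.mem_insert_iff, Set.mem_singleton_iff] at hx hy
        rcases hx with rfl | rfl <;> rcases hy with rfl | rfl <;>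
          first
            | exact absurd rfl hne
            | assumption
    have hS''max : T.MaximalOrthoIn R (B'' ∪ ({σ1, σ0} : Set P)) := by
      refine ⟨hS''R, hS''o, ?_⟩
      intro S₂ hsub₂ hS₂R hS₂o
      apply Set.Subset.antisymm _ hsub₂
      intro y hy
      by_contra hyS''
      have hyO : ∀ s ∈ B'' ∪ ({σ1, σ0} : Set P), T.p s y = 0 := fun s hs =>
        hS₂o s (hsub₂ hs) y hy (fun h => hyS'' (h ▸ hs))
      have hyB'' : y ∈ T.orthC B'' := fun b hb => hyO b (Or.inl hb)
      have hyB' : y ∈ T.orthC (S \ {σ1, σ0}) := horthCeq ▸ hyB''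
      have hyperpS : ∀ s ∈ S, T.p s y = 0 := by
        intro s hsS
        by_cases hsmem : s ∈ ({σ1, σ0} : Set P)
        · exact hyO s (Or.inr hsmem)
        · exact hyB' s ⟨hsS, hsmem⟩
      have horthoSy : T.IsOrthoSet (S ∪ {y}) := by
        intro c hc d hd hnecd
        rcases hc with hc | hc <;> rcases hd with hd | hd
        · exact hSo c hc d hd hnecd
        · rw [hd]; exact hyperpS c hc
        · rw [hc]; exact T.zero_swap (hyperpS d hd)
        · rw [hc, hd] at hnecd; exact absurd rfl hnecd
      have hSy : S ∪ {y} = S := hSmax.2.2 (S ∪ {y}) Set.subset_union_left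
        (by
          intro v hv
          rcases hv with hv | hv
          · exact hSR hv
          · rw [hv]; exact hS₂R hy)
        horthoSy
      have hyS : y ∈ S := by rw [← hSy]; exact Or.inr rfl
      have := hyperpS y hyS
      rw [T.p_self] at this; norm_num at this
    have hS''b := hwb.2 R hRoc _ hS''max
    -- all elements of B'' other than w are orthogonal to ρ
    have hbρ : ∀ b ∈ B'', b ≠ w → T.p b ρ = 0 := by
      intro b hb hbw
      have hbσ1 : b ≠ σ1 := fun h => by
        have := hB''σ1 b hb; rw [h, T.p_self] at this; norm_num at this
      have hbσ0 : b ≠ σ0 := fun h => by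
        have := hB''σ0 b hb; rw [h, T.p_self] at this; norm_num at this
      have hbw' : T.p b w = 0 := hB''o b hb w hwB''mem hbw
      have hwb' : T.p w b = 0 := T.zero_swap hbw'
      have hbs1 : T.p b σ1 = 0 := hB''σ1 b hb
      have hs1b : T.p σ1 b = 0 := T.zero_swap hbs1
      have hbs0 : T.p b σ0 = 0 := hB''σ0 b hb
      have hs0b : T.p σ0 b = 0 := T.zero_swap hbs0
      have hcoe4 : (↑({w, σ1, σ0, b} : Finset P) : Set P)
          = ({w, σ1, σ0, b} : Set P) := by simp
      have hset4 : T.IsOrthoSet (↑({w, σ1, σ0, b} : Finset P) : Set P) := by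
        rw [hcoe4]
        intro x hx y hy hne
        simp only [Set.mem_insert_iff, Set.mem_singleton_iff] at hx hy
        rcases hx with rfl | rfl | rfl | rfl <;> rcases hy with rfl | rfl | rfl | rfl <;>
          first
            | exact absurd rfl hne
            | assumption
      have hle := T.finsetSum_le_one hwb hset4 ρ
      rw [Finset.sum_insert (by simp [hwne1, hwne0, Ne.symm hbw]),
        Finset.sum_insert (by simp [hσ1ne, Ne.symm hbσ1]),
        Finset.sum_insert (by simp [Ne.symm hbσ0]), Finset.sum_singleton] at hle
      have hnn := T.nonneg b ρ
      linarith
    -- the two-sphere N3 through ρ and w, with u := antipode of w in N3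
    have hsecρw : T.SameSector ρ w :=
      Relation.EqvGen.symm _ _ (Relation.EqvGen.rel _ _ hs'ne)
    obtain ⟨f3, hbij3, hform3⟩ := h2s ρ w (fun h => hwρ h.symm) hsecρw
    have hρD3 : ρ ∈ T.orthC (T.orthC {ρ, w}) := T.subset_orthC2 _ (Or.inl rfl)
    have hwD3 : w ∈ T.orthC (T.orthC {ρ, w}) := T.subset_orthC2 _ (Or.inr rfl)
    obtain ⟨u, huD3, hu0, husum⟩ := T.antipode_exists hbij3 hform3 hwD3
    have hD3R : T.orthC (T.orthC {ρ, w}) ⊆ R := T.orthC2_min (by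
      intro v hv
      simp only [Set.mem_insert_iff, Set.mem_singleton_iff] at hv
      rcases hv with rfl | rfl
      · exact hρR
      · exact hwR)
    have huR : u ∈ R := hD3R huD3
    have huB'' : ∀ b ∈ B'', T.p b u = 0 := by
      intro b hb
      by_cases hbw : b = w
      · rw [hbw]; exact hu0
      · exact T.sphere_rigid hwb hbij3 hform3 hρD3 hwD3 (fun h => hwρ h.symm)
          (x := b) (hbρ b hb hbw) (hB''o b hb w hwB''mem hbw) u huD3
    have hlubu : IsLUB (T.sumSet (B'' ∪ ({σ1, σ0} : Set P)) u) 1 := hS''b.2.2 u huR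
    have hredu : T.sumSet (B'' ∪ ({σ1, σ0} : Set P)) u = T.sumSet ({σ1, σ0} : Set P) u :=
      T.sumSet_reduce u (fun v hv => Or.inr hv)
        (fun s hs hsn => by
          rcases hs with hs | hs
          · exact huB'' s hs
          · exact absurd hs hsn)
    rw [hredu] at hlubu
    have hpairset : T.IsOrthoSet ({σ1, σ0} : Set P) := by
      intro x hx y hy hne
      simp only [Set.mem_insert_iff, Set.mem_singleton_iff] at hx hy
      rcases hx with rfl | rfl <;> rcases hy with rfl | rfl <;>
        first
          | exact absurd rfl hne
          | assumption
    have huN : u ∈ T.orthC (T.orthC {σ1, σ0}) :=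
      T.mem_orthC2_of_isLUB hwb hpairset hlubu
    -- τ := antipode of u in N is orthogonal to ρ, contradiction
    obtain ⟨τ, hτN, hτ0, hτsum⟩ := T.antipode_exists hbijN hformN huN
    have hτw : T.p w τ = 0 := by
      apply hτN
      intro v hv
      simp only [Set.mem_insert_iff, Set.mem_singleton_iff] at hv
      rcases hv with rfl | rfl
      · exact hσ1w'
      · exact hσ0w'
    have huw : u ≠ w := fun h => by
      rw [h, T.p_self] at hu0; norm_num at hu0
    have hτρ : T.p τ ρ = 0 :=
      T.sphere_rigid hwb hbij3 hform3 huD3 hwD3 huw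
        (T.zero_swap hτ0) (T.zero_swap hτw) ρ hρD3
    exact key τ (hDNR hτN) (hQperpDN τ hτN) hτρ
end

section
/- Let P be a well-behaved transition probability space. If Q₁ ⊆ Q₂ are orthoclosed subsets of P that admit finite bases of the same cardinality, then Q₁ = Q₂. -/
namespace TPSpace
variable {P : Type*} (T : TPSpace P)

lemma univ_orthoclosed' : T.IsOrthoclosed (Set.univ : Set P) := by
  have h : T.orthC (Set.univ : Set P) = ∅ := by
    ext σ
    simp only [TPSpace.orthC, Set.mem_setOf_eq, Set.mem_empty_iff_false, iff_false]
    intro h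
    have h1 := h σ (Set.mem_univ σ)
    have h2 := (T.eq_one_iff σ σ).2 rfl
    linarith
  rw [TPSpace.IsOrthoclosed, h]
  ext σ; simp [TPSpace.orthC]

lemma exists_maximalOrtho' (Q B : Set P) (hBQ : B ⊆ Q) (hBo : T.IsOrthoSet B) :
    ∃ S, B ⊆ S ∧ T.MaximalOrthoIn Q S := by
  obtain ⟨m, hBm, hm, hmax⟩ := zorn_subset_nonempty {S | S ⊆ Q ∧ T.IsOrthoSet S}
    (fun c hc hchain _ => ⟨⋃₀ c,
      ⟨Set.sUnion_subset fun s hs => (hc hs).1,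
       fun ρ hρ σ hσ hne => by
        obtain ⟨s, hs, hρs⟩ := hρ
        obtain ⟨t, ht, hσt⟩ := hσ
        rcases hchain.total hs ht with hst | hts
        · exact (hc ht).2 ρ (hst hρs) σ hσt hne
        · exact (hc hs).2 ρ hρs σ (hts hσt) hne⟩,
      fun s hs => Set.subset_sUnion_of_mem hs⟩) B ⟨hBQ, hBo⟩
  exact ⟨m, hBm, hm.1, hm.2, fun S' hmS' hS'Q hS'o =>
    subset_antisymm (hmax ⟨hS'Q, hS'o⟩ hmS') hmS'⟩

lemma sum_eq_one_of_isLUB' {B : Finset P} {σ : P}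
    (h : IsLUB {s : ℝ | ∃ F : Finset P, ↑F ⊆ (↑B : Set P) ∧ s = ∑ ρ ∈ F, T.p ρ σ} 1) :
    ∑ ρ ∈ B, T.p ρ σ = 1 := by
  have hle := h.1 ⟨B, subset_rfl, rfl⟩
  have hub : (1 : ℝ) ≤ ∑ ρ ∈ B, T.p ρ σ := by
    apply h.2
    rintro s ⟨F, hF, rfl⟩
    exact Finset.sum_le_sum_of_subset_of_nonneg (by exact_mod_cast hF)
      (fun i _ _ => T.nonneg i σ)
  linarith

lemma partial_sum_le_one' {B : Set P} {Q : Set P} (hB : T.IsBasisOf B Q)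
    {σ : P} (hσ : σ ∈ Q) {F : Finset P} (hF : ↑F ⊆ B) :
    ∑ ρ ∈ F, T.p ρ σ ≤ 1 :=
  (hB.2.2 σ hσ).1 ⟨F, hF, rfl⟩

end TPSpace

/-- In a well-behaved transition probability space, orthoclosed subsets `Q₁ ⊆ Q₂` with
finite bases of the same cardinality are equal. -/
theorem orthoclosed_eq_of_subset_of_card_eq {P : Type*} (T : TPSpace P)
    (hwb : T.WellBehaved)
    (Q₁ Q₂ : Set P) (hQ₁ : T.IsOrthoclosed Q₁) (hQ₂ : T.IsOrthoclosed Q₂)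
    (hsub : Q₁ ⊆ Q₂)
    (B₁ B₂ : Finset P) (hB₁ : T.IsBasisOf ↑B₁ Q₁) (hB₂ : T.IsBasisOf ↑B₂ Q₂)
    (hcard : B₁.card = B₂.card) :
    Q₁ = Q₂ := by
  classical
  -- Step 1: extend B₁ to a maximal orthogonal subset S of Q₂
  obtain ⟨S, hB₁S, hSmax⟩ := T.exists_maximalOrtho' Q₂ ↑B₁ (hB₁.1.trans hsub) hB₁.2.1
  have hSbasis : T.IsBasisOf S Q₂ := hwb.2 Q₂ hQ₂ S hSmax
  -- every finite subset of S has card ≤ B₂.card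
  have hFcard : ∀ F : Finset P, ↑F ⊆ S → F.card ≤ B₂.card := by
    intro F hF
    have key : (F.card : ℝ) ≤ (B₂.card : ℝ) := by
      calc (F.card : ℝ) = ∑ ρ ∈ F, ∑ σ ∈ B₂, T.p ρ σ := by
            rw [Finset.sum_congr rfl fun ρ hρ => show ∑ σ ∈ B₂, T.p ρ σ = 1 from ?_]
            · simp
            · have hρQ₂ : ρ ∈ Q₂ := hSmax.1 (hF hρ)
              calc ∑ σ ∈ B₂, T.p ρ σ = ∑ σ ∈ B₂, T.p σ ρ :=
                    Finset.sum_congr rfl fun σ _ => hwb.1 ρ σ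
                _ = 1 := T.sum_eq_one_of_isLUB' (hB₂.2.2 ρ hρQ₂)
        _ = ∑ σ ∈ B₂, ∑ ρ ∈ F, T.p ρ σ := Finset.sum_comm
        _ ≤ ∑ σ ∈ B₂, 1 := Finset.sum_le_sum fun σ hσ =>
              T.partial_sum_le_one' hSbasis (hB₂.1 hσ) hF
        _ = (B₂.card : ℝ) := by simp
    exact_mod_cast key
  -- S is finite
  have hSfin : S.Finite := by
    by_contra h
    obtain ⟨F, hFS, hFc⟩ := Set.Infinite.exists_subset_card_eq (show S.Infinite from h)
      (B₂.card + 1)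
    have := hFcard F hFS
    omega
  -- S = B₁
  have hSB₁ : (↑B₁ : Set P) = S := by
    apply Set.eq_of_subset_of_ncard_le hB₁S ?_ hSfin
    have h1 : S.ncard ≤ B₂.card := by
      have := hFcard hSfin.toFinset (by simp)
      rwa [Set.ncard_eq_toFinset_card S hSfin]
    rw [Set.ncard_coe_finset]
    omega
  have hB₁basis : T.IsBasisOf (↑B₁ : Set P) Q₂ := hSB₁ ▸ hSbasis
  -- conclude
  refine Set.Subset.antisymm hsub fun σ hσ => ?_
  rw [← hQ₁]
  intro τ hτ
  -- τ ∈ orthC Q₁, show T.p τ σ = 0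
  have hτB₁ : τ ∉ (↑B₁ : Set P) := fun hmem => by
    have := hτ τ (hB₁.1 hmem)
    have h2 := (T.eq_one_iff τ τ).2 rfl
    linarith
  -- B₁ ∪ {τ} is orthogonal
  have hortho : T.IsOrthoSet (insert τ (↑B₁ : Set P)) := by
    rintro ρ hρ σ' hσ' hne
    rcases hρ with rfl | hρ
    · rcases hσ' with rfl | hσ'
      · exact absurd rfl hne
      · exact (T.zero_iff σ' ρ).mp (hτ σ' (hB₁.1 hσ'))
    · rcases hσ' with rfl | hσ'
      · exact hτ ρ (hB₁.1 hρ)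
      · exact hB₁.2.1 ρ hρ σ' hσ' hne
  obtain ⟨S', hS'sub, hS'max⟩ := T.exists_maximalOrtho' Set.univ
    (insert τ (↑B₁ : Set P)) (Set.subset_univ _) hortho
  have hS'basis : T.IsBasisOf S' Set.univ := hwb.2 _ T.univ_orthoclosed' S' hS'max
  have hsum : ∑ ρ ∈ insert τ B₁, T.p ρ σ ≤ 1 := by
    apply T.partial_sum_le_one' hS'basis (Set.mem_univ σ)
    rw [Finset.coe_insert]
    exact hS'sub
  rw [Finset.sum_insert (by exact_mod_cast hτB₁)] at hsum
  have hone : ∑ ρ ∈ B₁, T.p ρ σ = 1 := T.sum_eq_one_of_isLUB' (hB₁basis.2.2 σ hσ)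
  have := T.nonneg τ σ
  linarith
end

section
/- Let H be a complex Hilbert space and Q ⊆ H a closed subspace with orthogonal complement Q^⊥. Let f be a function on the unit sphere of H of the form f(τ) = Σ_{i=1}^N c_i |⟨ρ_i,τ⟩|², with N ∈ ℕ, c_i ∈ ℝ, and ρ_i unit vectors in H. If f(τ) ≥ 0 for every unit vector τ ∈ H, f(τ) = 0 for every unit vector τ ∈ Q, and f(τ) = 0 for every unit vector τ ∈ Q^⊥, then f(τ) = 0 for every unit vector τ ∈ H. -/
section Aux

variable {H : Type*} [NormedAddCommGroup H] [InnerProductSpace ℂ H]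

private noncomputable def sesq {N : ℕ} (c : Fin N → ℝ) (ρ : Fin N → H) (x y : H) : ℂ :=
  ∑ i, (c i : ℂ) * (starRingEnd ℂ (inner ℂ (ρ i) x)) * (inner ℂ (ρ i) y : ℂ)

private lemma sesq_self_re {N : ℕ} (c : Fin N → ℝ) (ρ : Fin N → H) (x : H) :
    sesq c ρ x x = ((∑ i, c i * ‖(inner ℂ (ρ i) x : ℂ)‖ ^ 2 : ℝ) : ℂ) := by
  rw [sesq]
  push_cast
  refine Finset.sum_congr rfl fun i _ => ?_
  rw [mul_assoc, RCLike.conj_mul]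
  norm_cast
  exact (Complex.ofReal_mul _ _).symm

/-- Cauchy–Schwarz for the PSD form `sesq`. -/
private lemma sesq_eq_zero {N : ℕ} (c : Fin N → ℝ) (ρ : Fin N → H)
    (hnn : ∀ x : H, 0 ≤ ∑ i, c i * ‖(inner ℂ (ρ i) x : ℂ)‖ ^ 2)
    {x : H} (hx : ∑ i, c i * ‖(inner ℂ (ρ i) x : ℂ)‖ ^ 2 = 0) (y : H) :
    sesq c ρ x y = 0 := by
  let core : PreInnerProductSpace.Core ℂ H :=
    { inner := sesq c ρ
      conj_inner_symm := by
        intro a b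
        show starRingEnd ℂ (sesq c ρ b a) = sesq c ρ a b
        simp only [sesq, map_sum, map_mul, RingHomCompTriple.comp_apply, RingHom.id_apply,
          Complex.conj_conj, Complex.conj_ofReal]
        refine Finset.sum_congr rfl fun i _ => ?_
        ring
      re_inner_nonneg := by
        intro a
        show 0 ≤ RCLike.re (sesq c ρ a a)
        simp only [RCLike.re_to_complex]
        rw [sesq_self_re, Complex.ofReal_re]
        exact hnn a
      add_left := by
        intro a b z
        show sesq c ρ (a + b) z = sesq c ρ a z + sesq c ρ b z
        simp only [sesq, inner_add_right, map_add, ← Finset.sum_add_distrib]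
        refine Finset.sum_congr rfl fun i _ => ?_
        ring
      smul_left := by
        intro a b r
        show sesq c ρ (r • a) b = starRingEnd ℂ r * sesq c ρ a b
        simp only [sesq, inner_smul_right, map_mul, Finset.mul_sum]
        refine Finset.sum_congr rfl fun i _ => ?_
        ring }
  have hcs := InnerProductSpace.Core.inner_mul_inner_self_le (c := core) x y
  have hxx : (@inner ℂ H core.toInner x x) = sesq c ρ x x := rfl
  have hxy : (@inner ℂ H core.toInner x y) = sesq c ρ x y := rfl
  have hyx : (@inner ℂ H core.toInner y x) = sesq c ρ y x := rfl
  rw [hxx, hxy, hyx] at hcs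
  have h0 : RCLike.re (sesq c ρ x x) = 0 := by rw [sesq_self_re, hx]; simp
  have hsymm : ‖sesq c ρ y x‖ = ‖sesq c ρ x y‖ := by
    have : starRingEnd ℂ (sesq c ρ x y) = sesq c ρ y x := core.conj_inner_symm y x
    rw [← this, RCLike.norm_conj]
  rw [hsymm, h0, zero_mul] at hcs
  have : ‖sesq c ρ x y‖ = 0 := by nlinarith [norm_nonneg (sesq c ρ x y)]
  simpa using this

end Aux

/-- If a function `f(τ) = ∑ᵢ cᵢ |⟨ρᵢ,τ⟩|²` on the unit sphere of a complex Hilbert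
space is nonnegative and vanishes on (the unit vectors of) a closed subspace `Q` and on
its orthogonal complement `Q^⊥`, then it vanishes identically on the unit sphere. -/
theorem vanishes_on_subspace_and_complement {H : Type*} [NormedAddCommGroup H]
    [InnerProductSpace ℂ H]
    (Q : Submodule ℂ H) (hQ : IsClosed (Q : Set H))
    (N : ℕ) (c : Fin N → ℝ) (ρ : Fin N → H) (hρ : ∀ i, ‖ρ i‖ = 1)
    (hpos : ∀ τ : H, ‖τ‖ = 1 → 0 ≤ ∑ i, c i * ‖(inner ℂ (ρ i) τ : ℂ)‖ ^ 2)
    (hQ0 : ∀ τ : H, τ ∈ Q → ‖τ‖ = 1 → ∑ i, c i * ‖(inner ℂ (ρ i) τ : ℂ)‖ ^ 2 = 0)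
    (hQperp0 : ∀ τ : H, τ ∈ Qᗮ → ‖τ‖ = 1 → ∑ i, c i * ‖(inner ℂ (ρ i) τ : ℂ)‖ ^ 2 = 0) :
    ∀ τ : H, ‖τ‖ = 1 → ∑ i, c i * ‖(inner ℂ (ρ i) τ : ℂ)‖ ^ 2 = 0 := by
  -- the quadratic form
  set g : H → ℝ := fun x => ∑ i, c i * ‖(inner ℂ (ρ i) x : ℂ)‖ ^ 2 with hg
  -- scaling
  have hsc : ∀ (r : ℝ) (u : H), g ((r : ℂ) • u) = r ^ 2 * g u := by
    intro r u
    simp only [hg, inner_smul_right, norm_mul, Complex.norm_real, Finset.mul_sum]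
    refine Finset.sum_congr rfl fun i _ => ?_
    rw [mul_pow, Real.norm_eq_abs, sq_abs]
    ring
  have hzero : g 0 = 0 := by simp [hg]
  have hscale : ∀ x : H, x ≠ 0 → g x = ‖x‖ ^ 2 * g ((‖x‖ : ℂ)⁻¹ • x) := by
    intro x hx0
    have hn : ((‖x‖ : ℝ) : ℂ) ≠ 0 := by
      exact_mod_cast norm_ne_zero_iff.2 hx0
    have hx' : x = ((‖x‖ : ℝ) : ℂ) • ((‖x‖ : ℂ)⁻¹ • x) := by
      rw [smul_smul, mul_inv_cancel₀ hn, one_smul]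
    conv_lhs => rw [hx']
    rw [hsc]
  have hunit : ∀ x : H, x ≠ 0 → ‖(‖x‖ : ℂ)⁻¹ • x‖ = 1 := by
    intro x hx0
    rw [norm_smul]
    have hn : ‖x‖ ≠ 0 := norm_ne_zero_iff.2 hx0
    rw [norm_inv, Complex.norm_real, Real.norm_eq_abs, abs_of_nonneg (norm_nonneg x),
      inv_mul_cancel₀ hn]
  -- g vanishes on all of a submodule if it vanishes on its unit vectors
  have hvanish : ∀ (K : Submodule ℂ H),
      (∀ τ : H, τ ∈ K → ‖τ‖ = 1 → g τ = 0) → ∀ x ∈ K, g x = 0 := by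
    intro K hK x hx
    rcases eq_or_ne x 0 with rfl | hx0
    · exact hzero
    · rw [hscale x hx0, hK _ (K.smul_mem _ hx) (hunit x hx0), mul_zero]
  -- g nonneg everywhere
  have hnn : ∀ x : H, 0 ≤ g x := by
    intro x
    rcases eq_or_ne x 0 with rfl | hx0
    · rw [hzero]
    · rw [hscale x hx0]
      exact mul_nonneg (sq_nonneg _) (hpos _ (hunit x hx0))
  have hQall : ∀ x ∈ Q, g x = 0 := hvanish Q hQ0
  have hQperpall : ∀ x ∈ Qᗮ, g x = 0 := hvanish Qᗮ hQperp0
  intro τ hτ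
  -- the vector T = ∑ cᵢ ⟨ρᵢ,τ⟩ • ρᵢ, so that ⟨x, T⟩ = sesq x τ
  set T : H := ∑ i, ((c i : ℂ) * (inner ℂ (ρ i) τ : ℂ)) • ρ i with hT
  have hinnerT : ∀ x : H, (inner ℂ x T : ℂ) = sesq c ρ x τ := by
    intro x
    rw [hT, inner_sum, sesq]
    refine Finset.sum_congr rfl fun i _ => ?_
    rw [inner_smul_right, ← inner_conj_symm x (ρ i)]
    ring
  have hTQperp : T ∈ Qᗮ := by
    rw [Submodule.mem_orthogonal]
    intro u hu
    rw [hinnerT u]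
    exact sesq_eq_zero c ρ hnn (hQall u hu) τ
  have hTQperpperp : T ∈ Qᗮᗮ := by
    rw [Submodule.mem_orthogonal]
    intro u hu
    rw [hinnerT u]
    exact sesq_eq_zero c ρ hnn (hQperpall u hu) τ
  have hT0 : T = 0 :=
    Submodule.disjoint_def.mp (Submodule.orthogonal_disjoint Qᗮ) T hTQperp hTQperpperp
  have hfin : sesq c ρ τ τ = 0 := by
    rw [← hinnerT τ, hT0, inner_zero_right]
  have h := sesq_self_re c ρ τ
  rw [hfin] at h
  exact_mod_cast h.symm
end

section
/- Let H be a complex Hilbert space and Q a finite-dimensional subspace of H with orthogonal projection P_Q. For every unit vector σ ∈ H, ‖P_Qσ‖² equals the infimum of f(σ) over all functions f on the unit sphere of H of the form f(τ) = Σ_{i=1}^N c_i |⟨ρ_i,τ⟩|² (N ∈ ℕ, c_i ∈ ℝ, ρ_i unit vectors) that satisfy 0 ≤ f(τ) ≤ 1 for every unit vector τ ∈ H and f(τ) = 1 for every unit vector τ ∈ Q; moreover this infimum is attained by the function τ ↦ ‖P_Qτ‖². -/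
open scoped ComplexConjugate

lemma parseval_proj {H : Type*} [NormedAddCommGroup H] [InnerProductSpace ℂ H] [CompleteSpace H]
    (Q : Submodule ℂ H) [FiniteDimensional ℂ Q] (τ : H) :
    ∑ i, ‖(inner ℂ ((stdOrthonormalBasis ℂ Q i : H)) τ : ℂ)‖ ^ 2
      = ‖Q.orthogonalProjection τ‖ ^ 2 := by
  set b := stdOrthonormalBasis ℂ Q
  set y := Q.orthogonalProjection τ with hy
  have h1 : ∀ i, (inner ℂ ((b i : H)) τ : ℂ) = inner ℂ (b i) y := by
    intro i; rw [hy, Submodule.inner_orthogonalProjection_eq_of_mem_left]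
  simp_rw [h1]
  rw [(b.repr.norm_map y).symm, EuclideanSpace.norm_eq, Real.sq_sqrt (by positivity)]
  congr 1; ext i; rw [b.repr_apply_apply]

lemma sum_smul_eval {H : Type*} [NormedAddCommGroup H] [InnerProductSpace ℂ H]
    {N : ℕ} (c : Fin N → ℝ) (ρ : Fin N → H) (x : H) (r : ℝ) :
    ∑ i, c i * ‖(inner ℂ (ρ i) ((r : ℂ) • x) : ℂ)‖ ^ 2
      = r ^ 2 * ∑ i, c i * ‖(inner ℂ (ρ i) x : ℂ)‖ ^ 2 := by
  rw [Finset.mul_sum]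
  congr 1; ext i
  rw [inner_smul_right]
  simp [norm_mul, mul_pow]
  ring

lemma cnorm_add_sq (z w : ℂ) : ‖z + w‖ ^ 2 = ‖z‖ ^ 2 + 2 * (conj z * w).re + ‖w‖ ^ 2 := by
  simp only [Complex.sq_norm, Complex.normSq_add]
  have : (z * conj w).re = (conj z * w).re := by
    rw [← Complex.conj_re (z * conj w)]; simp [mul_comm]
  rw [this]; ring

/-- For a finite-dimensional subspace `Q` of a complex Hilbert space and a unit vector
`σ`, the quantity `‖P_Q σ‖²` is the least value `f(σ)` over all functions
`f(τ) = ∑ᵢ cᵢ |⟨ρᵢ,τ⟩|²` satisfying `0 ≤ f ≤ 1` on the unit sphere and `f = 1` on the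
unit vectors of `Q`; moreover the infimum is attained by the function `τ ↦ ‖P_Q τ‖²`. -/
theorem projection_is_infimum {H : Type*} [NormedAddCommGroup H]
    [InnerProductSpace ℂ H] [CompleteSpace H]
    (Q : Submodule ℂ H) [FiniteDimensional ℂ Q] (σ : H) (hσ : ‖σ‖ = 1) :
    IsLeast {s : ℝ | ∃ (N : ℕ) (c : Fin N → ℝ) (ρ : Fin N → H),
        (∀ i, ‖ρ i‖ = 1) ∧
        (∀ τ : H, ‖τ‖ = 1 →
          0 ≤ ∑ i, c i * ‖(inner ℂ (ρ i) τ : ℂ)‖ ^ 2 ∧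
          ∑ i, c i * ‖(inner ℂ (ρ i) τ : ℂ)‖ ^ 2 ≤ 1) ∧
        (∀ τ : H, τ ∈ Q → ‖τ‖ = 1 → ∑ i, c i * ‖(inner ℂ (ρ i) τ : ℂ)‖ ^ 2 = 1) ∧
        s = ∑ i, c i * ‖(inner ℂ (ρ i) σ : ℂ)‖ ^ 2}
      (‖Q.orthogonalProjection σ‖ ^ 2) ∧
    ∃ (N : ℕ) (c : Fin N → ℝ) (ρ : Fin N → H),
      (∀ i, ‖ρ i‖ = 1) ∧
      (∀ τ : H, ‖τ‖ = 1 →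
        ∑ i, c i * ‖(inner ℂ (ρ i) τ : ℂ)‖ ^ 2 = ‖Q.orthogonalProjection τ‖ ^ 2) := by
  set b := stdOrthonormalBasis ℂ Q
  have hbnorm : ∀ i, ‖(b i : H)‖ = 1 := fun i => by
    rw [Submodule.norm_coe]; exact b.orthonormal.1 i
  have hpar : ∀ τ : H, ∑ i, (1 : ℝ) * ‖(inner ℂ ((b i : H)) τ : ℂ)‖ ^ 2
      = ‖Q.orthogonalProjection τ‖ ^ 2 := fun τ => by
    simpa using parseval_proj Q τ
  have hle : ∀ τ : H, ‖τ‖ = 1 → ‖Q.orthogonalProjection τ‖ ≤ 1 := by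
    intro τ hτ
    calc ‖Q.orthogonalProjection τ‖ ≤ ‖Q.orthogonalProjection‖ * ‖τ‖ :=
        Q.orthogonalProjection.le_opNorm τ
      _ ≤ 1 := by rw [hτ, mul_one]; exact Submodule.orthogonalProjection_norm_le Q
  refine ⟨⟨⟨Module.finrank ℂ Q, fun _ => 1, fun i => (b i : H), hbnorm, ?_, ?_, ?_⟩, ?_⟩,
    ⟨Module.finrank ℂ Q, fun _ => 1, fun i => (b i : H), hbnorm, fun τ _ => hpar τ⟩⟩
  · intro τ hτ
    rw [hpar τ]
    constructor
    · positivity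
    · nlinarith [hle τ hτ, norm_nonneg (Q.orthogonalProjection τ)]
  · intro τ hτQ hτ
    rw [hpar τ]
    have : Q.orthogonalProjection τ = ⟨τ, hτQ⟩ :=
      Submodule.orthogonalProjection_mem_subspace_eq_self (⟨τ, hτQ⟩ : Q)
    rw [this]
    simp only [Submodule.norm_coe] at *
    rw [show ‖(⟨τ, hτQ⟩ : Q)‖ = ‖τ‖ from rfl, hτ]; norm_num
  · exact (hpar σ).symm
  -- lower bound
  · rintro s ⟨N, c, ρ, hρ, hbd, hQf, rfl⟩
    set F : H → ℝ := fun x => ∑ i, c i * ‖(inner ℂ (ρ i) x : ℂ)‖ ^ 2 with hF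
    have hscale : ∀ x : H, x ≠ 0 → F x = ‖x‖ ^ 2 * F ((‖x‖⁻¹ : ℂ) • x) := by
      intro x hx
      have hnx : (‖x‖ : ℝ) ≠ 0 := norm_ne_zero_iff.mpr hx
      have : ((‖x‖ : ℂ)) • ((‖x‖⁻¹ : ℂ) • x) = x := by
        rw [smul_smul, mul_inv_cancel₀ (Complex.ofReal_ne_zero.mpr hnx), one_smul]
      calc F x = F (((‖x‖ : ℝ) : ℂ) • ((‖x‖⁻¹ : ℂ) • x)) := by rw [hF]; push_cast; rw [this]
        _ = ‖x‖ ^ 2 * F ((‖x‖⁻¹ : ℂ) • x) := sum_smul_eval c ρ _ _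
    have hunit : ∀ x : H, x ≠ 0 → ‖(‖x‖⁻¹ : ℂ) • x‖ = 1 := by
      intro x hx
      have hnx : (‖x‖ : ℝ) ≠ 0 := norm_ne_zero_iff.mpr hx
      rw [norm_smul]
      simp [abs_of_nonneg (norm_nonneg x), hnx]
    have hF0 : ∀ x : H, 0 ≤ F x := by
      intro x
      by_cases hx : x = 0
      · simp [hF, hx]
      · rw [hscale x hx]
        have := (hbd _ (hunit x hx)).1
        positivity
    have hF1 : ∀ x : H, F x ≤ ‖x‖ ^ 2 := by
      intro x
      by_cases hx : x = 0
      · simp [hF, hx]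
      · rw [hscale x hx]
        have h2 := (hbd _ (hunit x hx)).2
        nlinarith [sq_nonneg ‖x‖]
    have hFQ : ∀ x : H, x ∈ Q → F x = ‖x‖ ^ 2 := by
      intro x hxQ
      by_cases hx : x = 0
      · simp [hF, hx]
      · have hmem : (‖x‖⁻¹ : ℂ) • x ∈ Q := Q.smul_mem _ hxQ
        have h1 : F ((‖x‖⁻¹ : ℂ) • x) = 1 := hQf _ hmem (hunit x hx)
        rw [hscale x hx, h1, mul_one]
    set p : H := (Q.orthogonalProjection σ : H) with hp
    set w : H := σ - p with hwdef
    have hσpw : σ = p + w := by rw [hwdef]; abel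
    have hpQ : p ∈ Q := (Q.orthogonalProjection σ).2
    set R : ℝ := ∑ i, c i * (conj (inner ℂ (ρ i) p : ℂ) * (inner ℂ (ρ i) w : ℂ)).re with hR
    have hexp : ∀ t : ℝ, F (p + (t : ℂ) • w) = F p + 2 * t * R + t ^ 2 * F w := by
      intro t
      rw [hF, hR]
      simp only [Finset.mul_sum, ← Finset.sum_add_distrib]
      congr 1; ext i
      rw [inner_add_right, inner_smul_right, cnorm_add_sq]
      have h1 : (conj (inner ℂ (ρ i) p : ℂ) * ((t : ℂ) * (inner ℂ (ρ i) w : ℂ))).re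
          = t * (conj (inner ℂ (ρ i) p : ℂ) * (inner ℂ (ρ i) w : ℂ)).re := by
        rw [show conj (inner ℂ (ρ i) p : ℂ) * ((t : ℂ) * (inner ℂ (ρ i) w : ℂ))
            = (t : ℂ) * (conj (inner ℂ (ρ i) p : ℂ) * (inner ℂ (ρ i) w : ℂ)) by ring]
        exact Complex.re_ofReal_mul t _
      have h2 : ‖(t : ℂ) * (inner ℂ (ρ i) w : ℂ)‖ ^ 2 = t ^ 2 * ‖(inner ℂ (ρ i) w : ℂ)‖ ^ 2 := by
        rw [norm_mul, mul_pow, Complex.norm_real, Real.norm_eq_abs, sq_abs]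
      rw [h1, h2]
      ring
    have hwperp : w ∈ Qᗮ := Q.sub_starProjection_mem_orthogonal σ
    have hpw : (inner ℂ p w : ℂ) = 0 := hwperp p hpQ
    have hnorm_exp : ∀ t : ℝ, ‖p + (t : ℂ) • w‖ ^ 2 = ‖p‖ ^ 2 + t ^ 2 * ‖w‖ ^ 2 := by
      intro t
      rw [@norm_add_sq ℂ]
      rw [inner_smul_right, hpw, mul_zero]
      rw [norm_smul]
      simp only [Complex.norm_real, Real.norm_eq_abs, map_zero, mul_zero]
      rw [mul_pow, sq_abs]
      ring
    have hFp : F p = ‖p‖ ^ 2 := hFQ p hpQ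
    have hCnn : 0 ≤ ‖w‖ ^ 2 - F w := by linarith [hF1 w]
    have hquad : ∀ t : ℝ, 2 * t * R ≤ t ^ 2 * (‖w‖ ^ 2 - F w) := by
      intro t
      have h := hF1 (p + (t : ℂ) • w)
      rw [hexp t, hnorm_exp t, hFp] at h
      linarith
    have hRzero : R = 0 := by
      set C := ‖w‖ ^ 2 - F w with hC
      by_cases hc : C = 0
      · have h1 := hquad 1
        have h2 := hquad (-1)
        rw [hc] at h1 h2
        simp at h1 h2
        linarith
      · have hcpos : 0 < C := lt_of_le_of_ne hCnn (Ne.symm hc)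
        have h := hquad (R / C)
        rw [div_pow] at h
        have he : R ^ 2 / C ^ 2 * C = R ^ 2 / C := by field_simp
        rw [he, show 2 * (R / C) * R = 2 * (R ^ 2 / C) by ring] at h
        have h2 : R ^ 2 / C ≤ 0 := by linarith
        have h3 : R ^ 2 ≤ 0 := by
          rw [show R ^ 2 = C * (R ^ 2 / C) by field_simp]
          exact mul_nonpos_of_nonneg_of_nonpos (le_of_lt hcpos) h2
        have h4 : R ^ 2 = 0 := le_antisymm h3 (sq_nonneg R)
        exact sq_eq_zero_iff.mp h4
    have hfinal : F σ = ‖p‖ ^ 2 + F w := by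
      have := hexp 1
      simp only [Complex.ofReal_one, one_smul] at this
      rw [← hσpw] at this
      rw [this, hFp, hRzero]; ring
    have : ‖Q.orthogonalProjection σ‖ ^ 2 = ‖p‖ ^ 2 := by rw [hp, Submodule.norm_coe]
    show ‖Q.orthogonalProjection σ‖ ^ 2 ≤ F σ
    rw [this, hfinal]
    have := hF0 w
    linarith
end

section
/- Let H be a complex Hilbert space and let x, y be unit vectors in H. Let ω_x and ω_y be the vector states on the algebra B(H) of bounded linear operators on H, i.e., ω_x(A) = ⟨x, A x⟩ and ω_y(A) = ⟨y, A y⟩. Then the norm of the continuous linear functional ω_x − ω_y on B(H) satisfies ‖ω_x − ω_y‖² = 4(1 − |⟨x,y⟩|²); equivalently, the transition probability p(ω_x,ω_y) = 1 − ¼‖ω_x − ω_y‖² equals |⟨x,y⟩|². -/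
set_option maxHeartbeats 1000000 in
open ContinuousLinearMap in
/-- Key lemma: if `⟪x,y⟫` is a nonnegative real, then
`‖ω_x - ω_y‖ = ‖x+y‖ * ‖x-y‖`. -/
lemma vstate_key {H : Type*} [NormedAddCommGroup H]
    [InnerProductSpace ℂ H] [CompleteSpace H]
    (x y : H) (hx : ‖x‖ = 1) (hy : ‖y‖ = 1) (r : ℝ) (hr0 : 0 ≤ r)
    (hr : (inner ℂ x y : ℂ) = (r : ℂ)) :
    ‖(innerSL ℂ x).comp (ContinuousLinearMap.apply ℂ H x)
        - (innerSL ℂ y).comp (ContinuousLinearMap.apply ℂ H y)‖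
      = ‖x + y‖ * ‖x - y‖ := by
  set φ := (innerSL ℂ x).comp (ContinuousLinearMap.apply ℂ H x)
      - (innerSL ℂ y).comp (ContinuousLinearMap.apply ℂ H y) with hφ
  have hyx : (inner ℂ y x : ℂ) = (r : ℂ) := by
    rw [← inner_conj_symm, hr]; exact Complex.conj_ofReal r
  have hselfx : (inner ℂ x x : ℂ) = 1 := by
    rw [inner_self_eq_norm_sq_to_K, hx]; norm_num
  have hselfy : (inner ℂ y y : ℂ) = 1 := by
    rw [inner_self_eq_norm_sq_to_K, hy]; norm_num
  have hpq : (inner ℂ (x + y) (x - y) : ℂ) = 0 := by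
    simp only [inner_add_left, inner_sub_right, hr, hyx, hselfx, hselfy]
    ring
  have hqp : (inner ℂ (x - y) (x + y) : ℂ) = 0 := by
    rw [← inner_conj_symm, hpq]; simp
  have hφA : ∀ A : H →L[ℂ] H,
      φ A = ((inner ℂ (x + y) (A (x - y)) : ℂ) + (inner ℂ (x - y) (A (x + y)) : ℂ)) / 2 := by
    intro A
    simp only [hφ, ContinuousLinearMap.sub_apply, ContinuousLinearMap.comp_apply,
      ContinuousLinearMap.apply_apply, innerSL_apply_apply, map_add, map_sub,
      inner_add_left, inner_sub_left, inner_add_right, inner_sub_right]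
    ring
  have hub : ‖φ‖ ≤ ‖x + y‖ * ‖x - y‖ := by
    refine ContinuousLinearMap.opNorm_le_bound _ (by positivity) fun A => ?_
    rw [hφA A]
    have h1 : ‖(inner ℂ (x + y) (A (x - y)) : ℂ)‖ ≤ ‖x + y‖ * ‖x - y‖ * ‖A‖ := by
      calc ‖(inner ℂ (x + y) (A (x - y)) : ℂ)‖ ≤ ‖x + y‖ * ‖A (x - y)‖ :=
            norm_inner_le_norm _ _
        _ ≤ ‖x + y‖ * (‖A‖ * ‖x - y‖) := by
            gcongr; exact A.le_opNorm _
        _ = ‖x + y‖ * ‖x - y‖ * ‖A‖ := by ring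
    have h2 : ‖(inner ℂ (x - y) (A (x + y)) : ℂ)‖ ≤ ‖x + y‖ * ‖x - y‖ * ‖A‖ := by
      calc ‖(inner ℂ (x - y) (A (x + y)) : ℂ)‖ ≤ ‖x - y‖ * ‖A (x + y)‖ :=
            norm_inner_le_norm _ _
        _ ≤ ‖x - y‖ * (‖A‖ * ‖x + y‖) := by
            gcongr; exact A.le_opNorm _
        _ = ‖x + y‖ * ‖x - y‖ * ‖A‖ := by ring
    calc ‖((inner ℂ (x + y) (A (x - y)) : ℂ) + (inner ℂ (x - y) (A (x + y)) : ℂ)) / 2‖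
        = ‖(inner ℂ (x + y) (A (x - y)) : ℂ) + (inner ℂ (x - y) (A (x + y)) : ℂ)‖ / 2 := by
          rw [norm_div]; norm_num
      _ ≤ (‖(inner ℂ (x + y) (A (x - y)) : ℂ)‖ + ‖(inner ℂ (x - y) (A (x + y)) : ℂ)‖) / 2 := by
          gcongr; exact norm_add_le _ _
      _ ≤ (‖x + y‖ * ‖x - y‖ * ‖A‖ + ‖x + y‖ * ‖x - y‖ * ‖A‖) / 2 := by gcongr
      _ = ‖x + y‖ * ‖x - y‖ * ‖A‖ := by ring
  have hlb : ‖x + y‖ * ‖x - y‖ ≤ ‖φ‖ := by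
    by_cases hq : x - y = 0
    · simp [hq]
    have hqn : ‖x - y‖ ≠ 0 := by simpa using hq
    have hpsq : ‖x + y‖ ^ 2 = 2 + 2 * r := by
      rw [norm_add_sq (𝕜 := ℂ), hr, hx, hy]; simp; ring
    have hpn : ‖x + y‖ ≠ 0 := by
      intro h; rw [h] at hpsq; nlinarith
    set u : H := ((‖x + y‖ : ℂ))⁻¹ • (x + y) with hu_def
    set v : H := ((‖x - y‖ : ℂ))⁻¹ • (x - y) with hv_def
    have hu : ‖u‖ = 1 := by
      rw [hu_def, norm_smul]
      simp [hpn, norm_inv]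
    have hv : ‖v‖ = 1 := by
      rw [hv_def, norm_smul]
      simp [hqn, norm_inv]
    have huv : (inner ℂ u v : ℂ) = 0 := by
      rw [hu_def, hv_def, inner_smul_left, inner_smul_right, hpq]
      ring
    have hvu : (inner ℂ v u : ℂ) = 0 := by
      rw [← inner_conj_symm, huv]; simp
    have hon : Orthonormal ℂ ![u, v] := by
      constructor
      · intro i
        fin_cases i
        · exact hu
        · exact hv
      · intro i j hij
        fin_cases i <;> fin_cases j
        · exact absurd rfl hij
        · exact huv
        · exact hvu
        · exact absurd rfl hij
    have hbessel : ∀ z : H, ‖(inner ℂ v z : ℂ)‖ ^ 2 + ‖(inner ℂ u z : ℂ)‖ ^ 2 ≤ ‖z‖ ^ 2 := by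
      intro z
      have := hon.sum_inner_products_le (s := Finset.univ) z
      simpa [Fin.sum_univ_two, add_comm] using this
    set A : H →L[ℂ] H := (innerSL ℂ v).smulRight u + (innerSL ℂ u).smulRight v with hA
    have hAz : ∀ z, A z = (inner ℂ v z : ℂ) • u + (inner ℂ u z : ℂ) • v := fun z => rfl
    have hAnorm : ‖A‖ ≤ 1 := by
      refine ContinuousLinearMap.opNorm_le_bound _ zero_le_one fun z => ?_
      rw [one_mul, hAz]
      have hinner0 : (inner ℂ ((inner ℂ v z : ℂ) • u) ((inner ℂ u z : ℂ) • v) : ℂ) = 0 := by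
        rw [inner_smul_left, inner_smul_right, huv]; ring
      have hsq : ‖(inner ℂ v z : ℂ) • u + (inner ℂ u z : ℂ) • v‖ ^ 2
          = ‖(inner ℂ v z : ℂ)‖ ^ 2 + ‖(inner ℂ u z : ℂ)‖ ^ 2 := by
        rw [norm_add_sq (𝕜 := ℂ), hinner0]
        simp [norm_smul, hu, hv]
      calc ‖(inner ℂ v z : ℂ) • u + (inner ℂ u z : ℂ) • v‖
          = Real.sqrt (‖(inner ℂ v z : ℂ) • u + (inner ℂ u z : ℂ) • v‖ ^ 2) :=
            (Real.sqrt_sq (norm_nonneg _)).symm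
        _ ≤ Real.sqrt (‖z‖ ^ 2) := Real.sqrt_le_sqrt (by rw [hsq]; exact hbessel z)
        _ = ‖z‖ := Real.sqrt_sq (norm_nonneg _)
    have hselfp : (inner ℂ (x + y) (x + y) : ℂ) = (‖x + y‖ : ℂ) ^ 2 :=
      inner_self_eq_norm_sq_to_K _
    have hselfq : (inner ℂ (x - y) (x - y) : ℂ) = (‖x - y‖ : ℂ) ^ 2 :=
      inner_self_eq_norm_sq_to_K _
    have hpn' : (‖x + y‖ : ℂ) ≠ 0 := Complex.ofReal_ne_zero.mpr hpn
    have hqn' : (‖x - y‖ : ℂ) ≠ 0 := Complex.ofReal_ne_zero.mpr hqn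
    have hvq : (inner ℂ v (x - y) : ℂ) = (‖x - y‖ : ℂ) := by
      rw [hv_def, inner_smul_left, hselfq, map_inv₀, Complex.conj_ofReal,
        pow_two, ← mul_assoc, inv_mul_cancel₀ hqn', one_mul]
    have huq : (inner ℂ u (x - y) : ℂ) = 0 := by
      rw [hu_def, inner_smul_left, hpq]; ring
    have hvp : (inner ℂ v (x + y) : ℂ) = 0 := by
      rw [hv_def, inner_smul_left, hqp]; ring
    have hup : (inner ℂ u (x + y) : ℂ) = (‖x + y‖ : ℂ) := by
      rw [hu_def, inner_smul_left, hselfp, map_inv₀, Complex.conj_ofReal,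
        pow_two, ← mul_assoc, inv_mul_cancel₀ hpn', one_mul]
    have hpu : (inner ℂ (x + y) u : ℂ) = (‖x + y‖ : ℂ) := by
      rw [← inner_conj_symm, hup]; simp [Complex.conj_ofReal]
    have hqv : (inner ℂ (x - y) v : ℂ) = (‖x - y‖ : ℂ) := by
      rw [← inner_conj_symm, hvq]; simp [Complex.conj_ofReal]
    have hpv : (inner ℂ (x + y) v : ℂ) = 0 := by
      rw [← inner_conj_symm, hvp]; simp
    have hqu : (inner ℂ (x - y) u : ℂ) = 0 := by
      rw [← inner_conj_symm, huq]; simp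
    have hφAval : φ A = ((‖x + y‖ * ‖x - y‖ : ℝ) : ℂ) := by
      rw [hφA A, hAz, hAz]
      simp only [inner_add_right, inner_smul_right, hvq, huq, hvp, hup, hpu, hqv, hpv, hqu,
        zero_mul, mul_zero, add_zero, zero_add, zero_smul, inner_zero_right]
      push_cast
      ring
    calc ‖x + y‖ * ‖x - y‖ = ‖φ A‖ := by
          rw [hφAval]
          simp [abs_of_nonneg (mul_nonneg (norm_nonneg _) (norm_nonneg _))]
      _ ≤ ‖φ‖ * ‖A‖ := φ.le_opNorm A
      _ ≤ ‖φ‖ * 1 := mul_le_mul_of_nonneg_left hAnorm (norm_nonneg _)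
      _ = ‖φ‖ := mul_one _
  exact le_antisymm hub hlb

lemma vstate_key_sq {H : Type*} [NormedAddCommGroup H]
    [InnerProductSpace ℂ H] [CompleteSpace H]
    (x y : H) (hx : ‖x‖ = 1) (hy : ‖y‖ = 1) (r : ℝ) (hr0 : 0 ≤ r)
    (hr : (inner ℂ x y : ℂ) = (r : ℂ)) :
    ‖(innerSL ℂ x).comp (ContinuousLinearMap.apply ℂ H x)
        - (innerSL ℂ y).comp (ContinuousLinearMap.apply ℂ H y)‖ ^ 2
      = 4 * (1 - r ^ 2) := by
  rw [vstate_key x y hx hy r hr0 hr, mul_pow]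
  have hpsq : ‖x + y‖ ^ 2 = 2 + 2 * r := by
    rw [norm_add_sq (𝕜 := ℂ), hr, hx, hy]; simp; ring
  have hqsq : ‖x - y‖ ^ 2 = 2 - 2 * r := by
    rw [norm_sub_sq (𝕜 := ℂ), hr, hx, hy]; simp; ring
  rw [hpsq, hqsq]; ring

/-- For unit vectors `x, y` of a complex Hilbert space, the vector states
`ω_x : A ↦ ⟨x, A x⟩` and `ω_y : A ↦ ⟨y, A y⟩` on `B(H)` satisfy
`‖ω_x − ω_y‖² = 4(1 − |⟨x,y⟩|²)`; equivalently `1 − ¼‖ω_x − ω_y‖² = |⟨x,y⟩|²`. -/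
theorem vector_state_norm_diff {H : Type*} [NormedAddCommGroup H]
    [InnerProductSpace ℂ H] [CompleteSpace H]
    (x y : H) (hx : ‖x‖ = 1) (hy : ‖y‖ = 1) :
    ‖(innerSL ℂ x).comp (ContinuousLinearMap.apply ℂ H x)
        - (innerSL ℂ y).comp (ContinuousLinearMap.apply ℂ H y)‖ ^ 2
      = 4 * (1 - ‖(inner ℂ x y : ℂ)‖ ^ 2) ∧
    1 - (1 / 4) * ‖(innerSL ℂ x).comp (ContinuousLinearMap.apply ℂ H x)
        - (innerSL ℂ y).comp (ContinuousLinearMap.apply ℂ H y)‖ ^ 2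
      = ‖(inner ℂ x y : ℂ)‖ ^ 2 := by
  have key : ‖(innerSL ℂ x).comp (ContinuousLinearMap.apply ℂ H x)
        - (innerSL ℂ y).comp (ContinuousLinearMap.apply ℂ H y)‖ ^ 2
      = 4 * (1 - ‖(inner ℂ x y : ℂ)‖ ^ 2) := by
    by_cases hc : (inner ℂ x y : ℂ) = 0
    · rw [vstate_key_sq x y hx hy 0 le_rfl (by simpa using hc), hc]
      norm_num
    · set c : ℂ := inner ℂ x y with hc_def
      set α : ℂ := (starRingEnd ℂ) c / (‖c‖ : ℂ) with hα_def
      have hcn : (‖c‖ : ℂ) ≠ 0 := by simpa using hc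
      have hα : ‖α‖ = 1 := by
        have hcc : ‖c‖ ≠ 0 := by simpa using hc
        rw [hα_def, norm_div, RCLike.norm_conj]
        simp [hcc]
      have hy' : ‖α • y‖ = 1 := by rw [norm_smul, hα, hy, one_mul]
      have hinner' : (inner ℂ x (α • y) : ℂ) = (‖c‖ : ℂ) := by
        rw [inner_smul_right, ← hc_def, hα_def, div_mul_eq_mul_div, RCLike.conj_mul]
        push_cast
        rw [pow_two, mul_div_assoc]
        field_simp
        rfl
      have hωy : (innerSL ℂ (α • y)).comp (ContinuousLinearMap.apply ℂ H (α • y))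
          = (innerSL ℂ y).comp (ContinuousLinearMap.apply ℂ H y) := by
        ext A
        simp only [ContinuousLinearMap.comp_apply, ContinuousLinearMap.apply_apply,
          innerSL_apply_apply, map_smul, ContinuousLinearMap.smul_apply, inner_smul_left,
          inner_smul_right, smul_eq_mul]
        rw [← mul_assoc, mul_comm α ((starRingEnd ℂ) α), RCLike.conj_mul, hα]
        norm_num
      rw [← hωy, vstate_key_sq x (α • y) hx hy' ‖c‖ (norm_nonneg c) hinner']
  exact ⟨key, by rw [key]; ring⟩
end

section
/- Let V be a real vector space equipped with two bilinear maps ∘ and [·,·] : V × V → V such that ∘ is symmetric, [·,·] is antisymmetric and satisfies the Jacobi identity, the Leibniz rule [a, b∘c] = [a,b]∘c + b∘[a,c] holds, and the associator identity (a∘b)∘c − a∘(b∘c) = ¼·[[a,c],b] holds for all a,b,c ∈ V (i.e., V is a Jordan–Lie algebra with k = ¼). Define a product on V × V (the complexification, with (a,b) representing a + ib) by (a,b)·(c,d) = (a∘c − b∘d + ½[a,d] + ½[b,c], a∘d + b∘c − ½[a,c] + ½[b,d]). Then this product is associative. -/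
set_option maxHeartbeats 2000000 in
/-- In a Jordan–Lie algebra with `k = ¼` (a symmetric bilinear Jordan product `∘`, an
antisymmetric bilinear bracket `[·,·]` satisfying the Jacobi identity, the Leibniz rule,
and the associator identity `(a∘b)∘c − a∘(b∘c) = ¼[[a,c],b]`), the product on the
complexification `V × V` given by
`(a,b)·(c,d) = (a∘c − b∘d + ½[a,d] + ½[b,c], a∘d + b∘c − ½[a,c] + ½[b,d])`
is associative. -/
theorem jordanLie_complexification_assoc {V : Type*} [AddCommGroup V] [Module ℝ V]
    (o : V →ₗ[ℝ] V →ₗ[ℝ] V) (l : V →ₗ[ℝ] V →ₗ[ℝ] V)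
    (hsymm : ∀ a b : V, o a b = o b a)
    (hanti : ∀ a b : V, l a b = -l b a)
    (hjacobi : ∀ a b c : V, l a (l b c) + l b (l c a) + l c (l a b) = 0)
    (hleibniz : ∀ a b c : V, l a (o b c) = o (l a b) c + o b (l a c))
    (hassoc : ∀ a b c : V, o (o a b) c - o a (o b c) = (1 / 4 : ℝ) • l (l a c) b)
    (mul : V × V → V × V → V × V)
    (hmul : ∀ a b c d : V, mul (a, b) (c, d) =
      (o a c - o b d + (1 / 2 : ℝ) • l a d + (1 / 2 : ℝ) • l b c,
       o a d + o b c - (1 / 2 : ℝ) • l a c + (1 / 2 : ℝ) • l b d)) :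
    ∀ x y z : V × V, mul (mul x y) z = mul x (mul y z) := by
  have hosr : ∀ p q r : V, o r (o p q) = o r (o q p) := fun p q r => by rw [hsymm p q]
  have hosl : ∀ p q r : V, o (o p q) r = o (o q p) r := fun p q r => by rw [hsymm p q]
  have hlsr : ∀ p q r : V, l r (o p q) = l r (o q p) := fun p q r => by rw [hsymm p q]
  have hlsl : ∀ p q r : V, l (o p q) r = l (o q p) r := fun p q r => by rw [hsymm p q]
  have hoar : ∀ p q r : V, o r (l p q) = -o r (l q p) := fun p q r => by rw [hanti p q, map_neg]
  have hoal : ∀ p q r : V, o (l p q) r = -o (l q p) r := fun p q r => by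
    rw [hanti p q, map_neg, LinearMap.neg_apply]
  have hlar : ∀ p q r : V, l r (l p q) = -l r (l q p) := fun p q r => by rw [hanti p q, map_neg]
  have hlal : ∀ p q r : V, l (l p q) r = -l (l q p) r := fun p q r => by
    rw [hanti p q, map_neg, LinearMap.neg_apply]
  rintro ⟨a, b⟩ ⟨c, d⟩ ⟨e, f⟩
  rw [hmul, hmul, hmul, hmul]
  refine Prod.ext ?_ ?_
  · show _ = _
    simp only [map_add, map_sub, map_smul, LinearMap.add_apply, LinearMap.sub_apply,
      LinearMap.smul_apply]
    linear_combination (norm := module)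
      (-1/4 : ℝ) • (hanti (l a c) e) +
      (1/4 : ℝ) • (hjacobi a c e) +
      (1/1 : ℝ) • (hassoc a c e) +
      (-1/4 : ℝ) • (hlar a e c) +
      (1/4 : ℝ) • (hanti (l a e) c) +
      (1/2 : ℝ) • (hanti (o a c) f) +
      (-1/2 : ℝ) • (hleibniz a c f) +
      (1/2 : ℝ) • (hsymm (l a f) c) +
      (-1/2 : ℝ) • (hoal a f c) +
      (-1/2 : ℝ) • (hoar c f a) +
      (-1/2 : ℝ) • (hleibniz f a c) +
      (1/2 : ℝ) • (hanti (o a d) e) +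
      (-1/2 : ℝ) • (hleibniz a d e) +
      (1/2 : ℝ) • (hsymm (l a e) d) +
      (-1/2 : ℝ) • (hoal a e d) +
      (-1/2 : ℝ) • (hoar d e a) +
      (-1/2 : ℝ) • (hleibniz e a d) +
      (1/4 : ℝ) • (hanti (l a d) f) +
      (-1/4 : ℝ) • (hjacobi a d f) +
      (-1/1 : ℝ) • (hassoc a d f) +
      (1/4 : ℝ) • (hlar a f d) +
      (-1/4 : ℝ) • (hanti (l a f) d) +
      (1/2 : ℝ) • (hanti (o b c) e) +
      (-1/2 : ℝ) • (hleibniz b c e) +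
      (1/2 : ℝ) • (hsymm (l b e) c) +
      (-1/2 : ℝ) • (hoal b e c) +
      (-1/2 : ℝ) • (hoar c e b) +
      (-1/2 : ℝ) • (hleibniz e b c) +
      (1/4 : ℝ) • (hanti (l b c) f) +
      (-1/4 : ℝ) • (hjacobi b c f) +
      (-1/1 : ℝ) • (hassoc b c f) +
      (1/4 : ℝ) • (hlar b f c) +
      (-1/4 : ℝ) • (hanti (l b f) c) +
      (1/4 : ℝ) • (hanti (l b d) e) +
      (-1/4 : ℝ) • (hjacobi b d e) +
      (-1/1 : ℝ) • (hassoc b d e) +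
      (1/4 : ℝ) • (hlar b e d) +
      (-1/4 : ℝ) • (hanti (l b e) d) +
      (-1/2 : ℝ) • (hanti (o b d) f) +
      (1/2 : ℝ) • (hleibniz b d f) +
      (-1/2 : ℝ) • (hsymm (l b f) d) +
      (1/2 : ℝ) • (hoal b f d) +
      (1/2 : ℝ) • (hoar d f b) +
      (1/2 : ℝ) • (hleibniz f b d)
  · show _ = _
    simp only [map_add, map_sub, map_smul, LinearMap.add_apply, LinearMap.sub_apply,
      LinearMap.smul_apply]
    linear_combination (norm := module)
      (-1/2 : ℝ) • (hanti (o a c) e) +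
      (1/2 : ℝ) • (hleibniz a c e) +
      (-1/2 : ℝ) • (hsymm (l a e) c) +
      (1/2 : ℝ) • (hoal a e c) +
      (1/2 : ℝ) • (hoar c e a) +
      (1/2 : ℝ) • (hleibniz e a c) +
      (-1/4 : ℝ) • (hanti (l a c) f) +
      (1/4 : ℝ) • (hjacobi a c f) +
      (1/1 : ℝ) • (hassoc a c f) +
      (-1/4 : ℝ) • (hlar a f c) +
      (1/4 : ℝ) • (hanti (l a f) c) +
      (-1/4 : ℝ) • (hanti (l a d) e) +
      (1/4 : ℝ) • (hjacobi a d e) +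
      (1/1 : ℝ) • (hassoc a d e) +
      (-1/4 : ℝ) • (hlar a e d) +
      (1/4 : ℝ) • (hanti (l a e) d) +
      (1/2 : ℝ) • (hanti (o a d) f) +
      (-1/2 : ℝ) • (hleibniz a d f) +
      (1/2 : ℝ) • (hsymm (l a f) d) +
      (-1/2 : ℝ) • (hoal a f d) +
      (-1/2 : ℝ) • (hoar d f a) +
      (-1/2 : ℝ) • (hleibniz f a d) +
      (-1/4 : ℝ) • (hanti (l b c) e) +
      (1/4 : ℝ) • (hjacobi b c e) +
      (1/1 : ℝ) • (hassoc b c e) +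
      (-1/4 : ℝ) • (hlar b e c) +
      (1/4 : ℝ) • (hanti (l b e) c) +
      (1/2 : ℝ) • (hanti (o b c) f) +
      (-1/2 : ℝ) • (hleibniz b c f) +
      (1/2 : ℝ) • (hsymm (l b f) c) +
      (-1/2 : ℝ) • (hoal b f c) +
      (-1/2 : ℝ) • (hoar c f b) +
      (-1/2 : ℝ) • (hleibniz f b c) +
      (1/2 : ℝ) • (hanti (o b d) e) +
      (-1/2 : ℝ) • (hleibniz b d e) +
      (1/2 : ℝ) • (hsymm (l b e) d) +
      (-1/2 : ℝ) • (hoal b e d) +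
      (-1/2 : ℝ) • (hoar d e b) +
      (-1/2 : ℝ) • (hleibniz e b d) +
      (1/4 : ℝ) • (hanti (l b d) f) +
      (-1/4 : ℝ) • (hjacobi b d f) +
      (-1/1 : ℝ) • (hassoc b d f) +
      (1/4 : ℝ) • (hlar b f d) +
      (-1/4 : ℝ) • (hanti (l b f) d)
end

section
/- Let H be a complex Hilbert space and let R, S, Q be closed subspaces of H with R ⊆ S and R ⊆ Q. Then (closure(S + Q)) ∩ R^⊥ = closure((S ∩ R^⊥) + (Q ∩ R^⊥)); in lattice notation for the orthomodular lattice of closed subspaces of H: (S ∨ Q) ∧ R^⊥ = (S ∧ R^⊥) ∨ (Q ∧ R^⊥). -/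
/-- In the orthomodular lattice of closed subspaces of a complex Hilbert space, if
`R ⊆ S` and `R ⊆ Q` then `(S ∨ Q) ∧ R^⊥ = (S ∧ R^⊥) ∨ (Q ∧ R^⊥)`, where the join is
the closure of the sum and the meet is the intersection. -/
theorem closed_subspace_distributivity {H : Type*} [NormedAddCommGroup H]
    [InnerProductSpace ℂ H] [CompleteSpace H]
    (R S Q : Submodule ℂ H)
    (hR : IsClosed (R : Set H)) (hS : IsClosed (S : Set H)) (hQ : IsClosed (Q : Set H))
    (hRS : R ≤ S) (hRQ : R ≤ Q) :
    (S ⊔ Q).topologicalClosure ⊓ Rᗮ = ((S ⊓ Rᗮ) ⊔ (Q ⊓ Rᗮ)).topologicalClosure := by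
  haveI : CompleteSpace R := hR.completeSpace_coe
  set T := (S ⊓ Rᗮ) ⊔ (Q ⊓ Rᗮ) with hT
  apply le_antisymm
  · rintro x ⟨hx1, hx2⟩
    -- consider the continuous map y ↦ y - P_R y
    set f : H → H := fun y => y - (R.orthogonalProjectionOnto y : H) with hf
    have hfc : Continuous f :=
      continuous_id.sub ((R.subtypeL.comp R.orthogonalProjectionOnto).continuous)
    have hclosed : IsClosed (f ⁻¹' (T.topologicalClosure : Set H)) :=
      T.isClosed_topologicalClosure.preimage hfc
    have hsub : ((S ⊔ Q : Submodule ℂ H) : Set H) ⊆ f ⁻¹' (T.topologicalClosure : Set H) := by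
      intro y hy
      obtain ⟨s, hs, q, hq, rfl⟩ := Submodule.mem_sup.mp hy
      show f (s + q) ∈ T.topologicalClosure
      apply Submodule.le_topologicalClosure
      have heq : f (s + q)
          = (s - (R.orthogonalProjectionOnto s : H)) + (q - (R.orthogonalProjectionOnto q : H)) := by
        simp only [hf, map_add]
        push_cast
        abel
      rw [heq]
      exact Submodule.mem_sup.mpr
        ⟨_, ⟨S.sub_mem hs (hRS (R.orthogonalProjectionOnto s).2),
            Submodule.sub_starProjection_mem_orthogonal (K := R) s⟩,
         _, ⟨Q.sub_mem hq (hRQ (R.orthogonalProjectionOnto q).2),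
            Submodule.sub_starProjection_mem_orthogonal (K := R) q⟩, rfl⟩
    have hx1' : x ∈ closure ((S ⊔ Q : Submodule ℂ H) : Set H) := hx1
    have hxf : f x ∈ T.topologicalClosure :=
      closure_minimal hsub hclosed hx1'
    have hPx : R.orthogonalProjectionOnto x = 0 :=
      Submodule.orthogonalProjectionOnto_apply_of_mem_orthogonal hx2
    have hPx' : R.starProjection x = 0 := by
      show ((R.orthogonalProjectionOnto x : R) : H) = 0
      rw [hPx]; rfl
    simpa [hf, hPx, hPx'] using hxf
  · refine le_inf ?_ ?_
    · exact Submodule.topologicalClosure_mono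
        (sup_le (inf_le_left.trans le_sup_left) (inf_le_left.trans le_sup_right))
    · exact Submodule.topologicalClosure_minimal _
        (sup_le inf_le_right inf_le_right) R.isClosed_orthogonal
end
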